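/- arXiv:1006.1381 — 8 statements merged into one kernel-verified Lean document; each statement's English description precedes it below -/
import Mathlib

section
/- Let U and V be finite sets and let n ∈ ℕ with I = Fin n. Choose a set R of representatives of the equivalence classes of recollements of the pair (U, V); for a recollement (C, u : U → C, v : V → C) in R, the symmetric group S_n of Fin n acts on Inj(C, Fin n) by postcomposition, and S_n acts diagonally on Inj(U, Fin n) × Inj(V, Fin n) by postcomposition in each factor. Then the map from the disjoint union over (C, u, v) ∈ R of Inj(C, Fin n) to Inj(U, Fin n) × Inj(V, Fin n), sending h ∈ Inj(C, Fin n) to the pair (h ∘ u, h ∘ v), is an S_n-equivariant bijection. -/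
/-- A recollement of a pair of finite sets `U, V`: a finite set `C` together with
injections `u : U ↪ C`, `v : V ↪ C` whose images cover `C`. -/
structure Recollement (U V : Type) : Type 1 where
  C : Type
  [fintypeC : Fintype C]
  u : U ↪ C
  v : V ↪ C
  covers : ∀ c : C, (∃ x, u x = c) ∨ (∃ y, v y = c)

attribute [instance] Recollement.fintypeC

/-- Two recollements are equivalent if there is a bijection of the underlying sets
commuting with the injections from `U` and from `V`. -/
def Recollement.Equivalent {U V : Type} (r₁ r₂ : Recollement U V) : Prop :=
  ∃ e : r₁.C ≃ r₂.C, (∀ x, e (r₁.u x) = r₂.u x) ∧ (∀ y, e (r₁.v y) = r₂.v y)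

/-- Let `U, V` be finite sets, `n ∈ ℕ` and `R` a set of representatives
of the equivalence classes of recollements of `(U, V)`.  Then the map
`⨿_{(C,u,v) ∈ R} Inj(C, Fin n) → Inj(U, Fin n) × Inj(V, Fin n)`, `h ↦ (h ∘ u, h ∘ v)`,
is an `S_n`-equivariant bijection, where `S_n` acts everywhere by postcomposition
(diagonally on the product). -/
theorem stmt3 (U V : Type) [Fintype U] [Fintype V] (n : ℕ)
    (R : Set (Recollement U V))
    (hR : ∀ P : Recollement U V, ∃! r : R, P.Equivalent r.1) :
    Function.Bijective
        (fun p : Σ r : R, (r.1.C ↪ Fin n) =>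
          ((p.1.1.u.trans p.2, p.1.1.v.trans p.2) : (U ↪ Fin n) × (V ↪ Fin n))) ∧
      ∀ (σ : Equiv.Perm (Fin n)) (p : Σ r : R, (r.1.C ↪ Fin n)),
        (fun p : Σ r : R, (r.1.C ↪ Fin n) =>
            ((p.1.1.u.trans p.2, p.1.1.v.trans p.2) : (U ↪ Fin n) × (V ↪ Fin n)))
          ⟨p.1, p.2.trans σ.toEmbedding⟩ =
        ((p.1.1.u.trans p.2).trans σ.toEmbedding,
          (p.1.1.v.trans p.2).trans σ.toEmbedding) := by
  classical
  constructor
  · constructor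
    · -- injectivity
      rintro ⟨rs, h⟩ ⟨rs', h'⟩ heq
      simp only [Prod.mk.injEq] at heq
      obtain ⟨h1, h2⟩ := heq
      have h1' : ∀ x, h (rs.1.u x) = h' (rs'.1.u x) := fun x =>
        congrFun (congrArg (fun e : U ↪ Fin n => (e : U → Fin n)) h1) x
      have h2' : ∀ y, h (rs.1.v y) = h' (rs'.1.v y) := fun y =>
        congrFun (congrArg (fun e : V ↪ Fin n => (e : V → Fin n)) h2) y
      -- build an equivalence rs.1.C ≃ rs'.1.C
      have hex : ∀ c : rs.1.C, ∃ d : rs'.1.C, h' d = h c := by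
        intro c
        rcases rs.1.covers c with ⟨x, hx⟩ | ⟨y, hy⟩
        · exact ⟨rs'.1.u x, by rw [← hx, h1' x]⟩
        · exact ⟨rs'.1.v y, by rw [← hy, h2' y]⟩
      have hex' : ∀ d : rs'.1.C, ∃ c : rs.1.C, h c = h' d := by
        intro d
        rcases rs'.1.covers d with ⟨x, hx⟩ | ⟨y, hy⟩
        · exact ⟨rs.1.u x, by rw [← hx, h1' x]⟩
        · exact ⟨rs.1.v y, by rw [← hy, h2' y]⟩
      set e : rs.1.C → rs'.1.C := fun c => Classical.choose (hex c) with he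
      have hespec : ∀ c, h' (e c) = h c := fun c => Classical.choose_spec (hex c)
      have hbij : Function.Bijective e := by
        constructor
        · intro a b hab
          apply h.injective
          rw [← hespec a, ← hespec b, hab]
        · intro d
          obtain ⟨c, hc⟩ := hex' d
          refine ⟨c, h'.injective ?_⟩
          rw [hespec c, hc]
      have hequiv : rs.1.Equivalent rs'.1 := by
        refine ⟨Equiv.ofBijective e hbij, fun x => ?_, fun y => ?_⟩
        · exact h'.injective (by rw [Equiv.ofBijective_apply, hespec, h1' x])
        · exact h'.injective (by rw [Equiv.ofBijective_apply, hespec, h2' y])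
      -- uniqueness of representative
      obtain ⟨r₀, -, huniq⟩ := hR rs.1
      have hrefl : rs.1.Equivalent rs.1 := ⟨Equiv.refl _, fun _ => rfl, fun _ => rfl⟩
      have hrr : rs = rs' := (huniq rs hrefl).trans (huniq rs' hequiv).symm
      subst hrr
      -- now show h = h'
      have hh : h = h' := by
        ext c
        rcases rs.1.covers c with ⟨x, hx⟩ | ⟨y, hy⟩
        · rw [← hx]; exact congrArg Fin.val (h1' x)
        · rw [← hy]; exact congrArg Fin.val (h2' y)
      rw [hh]
    · -- surjectivity
      rintro ⟨f, g⟩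
      set P : Recollement U V :=
        { C := {i : Fin n // i ∈ Set.range f ∪ Set.range g}
          u := ⟨fun x => ⟨f x, Or.inl ⟨x, rfl⟩⟩,
            fun a b hab => f.injective (Subtype.mk.injEq .. ▸ hab)⟩
          v := ⟨fun y => ⟨g y, Or.inr ⟨y, rfl⟩⟩,
            fun a b hab => g.injective (Subtype.mk.injEq .. ▸ hab)⟩
          covers := by
            rintro ⟨i, ⟨x, hx⟩ | ⟨y, hy⟩⟩
            · exact Or.inl ⟨x, Subtype.ext hx⟩
            · exact Or.inr ⟨y, Subtype.ext hy⟩ } with hP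
      obtain ⟨r, ⟨e, heu, hev⟩, -⟩ := hR P
      refine ⟨⟨r, ⟨fun c => (e.symm c).1, fun a b hab => ?_⟩⟩, ?_⟩
      · have := Subtype.ext hab
        exact e.symm.injective this
      · have hu : ∀ x, ((e.symm (r.1.u x)).1 : Fin n) = f x := by
          intro x
          rw [← heu x, Equiv.symm_apply_apply]; rfl
        have hv : ∀ y, ((e.symm (r.1.v y)).1 : Fin n) = g y := by
          intro y
          rw [← hev y, Equiv.symm_apply_apply]; rfl
        simp only [Prod.mk.injEq]
        constructor
        · ext x; exact congrArg Fin.val (hu x)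
        · ext y; exact congrArg Fin.val (hv y)
  · intro σ p; rfl
end

section
/- Let U_1, …, U_m be finite sets and n ∈ ℕ. Let (f_1, …, f_m) and (g_1, …, g_m) be two m-tuples with f_i, g_i ∈ Inj(U_i, Fin n) for each i. Then there exists a permutation σ ∈ S_n with σ ∘ f_i = g_i for all i if and only if for all indices i, j and all elements u ∈ U_i and v ∈ U_j, one has f_i(u) = f_j(v) exactly when g_i(u) = g_j(v). -/
/-- Let `U₁, …, U_m` be finite sets and `n ∈ ℕ`.  Two `m`-tuples
`(f_i)` and `(g_i)` of injections `U_i ↪ Fin n` lie in the same orbit of the diagonal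
postcomposition action of `S_n` iff for all `i, j` and all `u ∈ U_i`, `v ∈ U_j` we have
`f_i u = f_j v ↔ g_i u = g_j v`. -/
theorem stmt4 (m : ℕ) (U : Fin m → Type) [∀ i, Fintype (U i)] (n : ℕ)
    (f g : ∀ i, U i ↪ Fin n) :
    (∃ σ : Equiv.Perm (Fin n), ∀ (i : Fin m) (u : U i), σ (f i u) = g i u) ↔
      ∀ (i j : Fin m) (u : U i) (v : U j), f i u = f j v ↔ g i u = g j v := by
  classical
  constructor
  · rintro ⟨σ, hσ⟩ i j u v
    constructor
    · intro h
      rw [← hσ i u, ← hσ j v, h]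
    · intro h
      apply σ.injective
      rw [hσ i u, hσ j v, h]
  · intro h
    set F : (Σ i, U i) → Fin n := fun x => f x.1 x.2 with hF
    set G : (Σ i, U i) → Fin n := fun x => g x.1 x.2 with hG
    have key : ∀ x y, F x = F y ↔ G x = G y := fun x y => h x.1 y.1 x.2 y.2
    let e : {x : Fin n // ∃ a, F a = x} ≃ {x : Fin n // ∃ a, G a = x} :=
      { toFun := fun x => ⟨G x.2.choose, x.2.choose, rfl⟩
        invFun := fun x => ⟨F x.2.choose, x.2.choose, rfl⟩
        left_inv := by
          rintro ⟨x, hx⟩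
          simp only [Subtype.mk.injEq]
          have : G (Exists.choose (⟨hx.choose, rfl⟩ : ∃ a, G a = G hx.choose))
              = G hx.choose :=
            Exists.choose_spec (⟨hx.choose, rfl⟩ : ∃ a, G a = G hx.choose)
          rw [(key _ _).2 this]
          exact hx.choose_spec
        right_inv := by
          rintro ⟨x, hx⟩
          simp only [Subtype.mk.injEq]
          have : F (Exists.choose (⟨hx.choose, rfl⟩ : ∃ a, F a = F hx.choose))
              = F hx.choose :=
            Exists.choose_spec (⟨hx.choose, rfl⟩ : ∃ a, F a = F hx.choose)
          rw [(key _ _).1 this]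
          exact hx.choose_spec }
    refine ⟨e.extendSubtype, fun i u => ?_⟩
    have hmem : ∃ a, F a = f i u := ⟨⟨i, u⟩, rfl⟩
    rw [show f i u = F ⟨i, u⟩ from rfl, e.extendSubtype_apply_of_mem (F ⟨i, u⟩) hmem]
    show G hmem.choose = g i u
    have : G hmem.choose = G ⟨i, u⟩ := (key _ _).1 hmem.choose_spec
    exact this
end

section
/- Let U and V be finite sets and n ∈ ℕ. For a recollement (C, u : U → C, v : V → C) of (U, V), define the ℂ-linear map (C) : ℂ[Inj(U, Fin n)] → ℂ[Inj(V, Fin n)] by sending the basis vector e_f, for f ∈ Inj(U, Fin n), to the sum of e_{h∘v} over all h ∈ Inj(C, Fin n) with h ∘ u = f. Then: (i) each map (C) commutes with the S_n-actions, i.e. (C) is a morphism of S_n-representations; (ii) as (C, u, v) ranges over a set of representatives of the equivalence classes of recollements of (U, V), the maps (C) span the ℂ-vector space of all S_n-equivariant linear maps ℂ[Inj(U, Fin n)] → ℂ[Inj(V, Fin n)]; (iii) if n > |U| + |V|, these maps form a basis of that space. -/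
/-- The action of `σ ∈ S_n` on the permutation representation `ℂ[Inj(U, Fin n)]`
(by postcomposition on the basis `{e_f}`). -/
noncomputable def permAct (U : Type) (n : ℕ) (σ : Equiv.Perm (Fin n)) :
    ((U ↪ Fin n) →₀ ℂ) →ₗ[ℂ] ((U ↪ Fin n) →₀ ℂ) :=
  (Finsupp.domLCongr (M := ℂ) (R := ℂ)
      (Equiv.embeddingCongr (Equiv.refl U) σ)).toLinearMap

open scoped Classical in
/-- The linear map `(C) : ℂ[Inj(U, Fin n)] → ℂ[Inj(V, Fin n)]` associated to a
recollement `(C, u, v)` of `(U, V)`: it sends the basis vector `e_f` to the sum of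
`e_{h ∘ v}` over all injections `h : C ↪ Fin n` with `h ∘ u = f`. -/
noncomputable def recMap (U V : Type) [Fintype U] [Fintype V] (n : ℕ)
    (r : Recollement U V) :
    ((U ↪ Fin n) →₀ ℂ) →ₗ[ℂ] ((V ↪ Fin n) →₀ ℂ) :=
  Finsupp.lift ((V ↪ Fin n) →₀ ℂ) ℂ (U ↪ Fin n) fun f =>
    ∑ h : r.C ↪ Fin n, if (∀ x, h (r.u x) = f x) then Finsupp.single (r.v.trans h) 1
      else 0

/-- The subspace of `S_n`-equivariant linear maps
`ℂ[Inj(U, Fin n)] → ℂ[Inj(V, Fin n)]`. -/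
noncomputable def equivariantMaps (U V : Type) (n : ℕ) :
    Submodule ℂ (((U ↪ Fin n) →₀ ℂ) →ₗ[ℂ] ((V ↪ Fin n) →₀ ℂ)) :=
  ⨅ σ : Equiv.Perm (Fin n),
    LinearMap.eqLocus
      (LinearMap.llcomp ℂ ((U ↪ Fin n) →₀ ℂ) ((V ↪ Fin n) →₀ ℂ)
        ((V ↪ Fin n) →₀ ℂ) (permAct V n σ))
      (LinearMap.lcomp ℂ ((V ↪ Fin n) →₀ ℂ) (permAct U n σ))

-- ================= auxiliary development =================
namespace Stmt6Aux

open scoped Classical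

theorem equivalent_refl {U V : Type} (r : Recollement U V) : r.Equivalent r :=
  ⟨Equiv.refl _, fun _ => rfl, fun _ => rfl⟩

theorem equivalent_symm {U V : Type} {r s : Recollement U V} (h : r.Equivalent s) :
    s.Equivalent r := by
  obtain ⟨e, h1, h2⟩ := h
  exact ⟨e.symm, fun x => by rw [← h1 x, Equiv.symm_apply_apply],
    fun y => by rw [← h2 y, Equiv.symm_apply_apply]⟩

theorem equivalent_trans {U V : Type} {r s t : Recollement U V} (h : r.Equivalent s)
    (h' : s.Equivalent t) : r.Equivalent t := by
  obtain ⟨e, h1, h2⟩ := h; obtain ⟨e', h1', h2'⟩ := h'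
  exact ⟨e.trans e', fun x => by simp [h1 x, h1' x], fun y => by simp [h2 y, h2' y]⟩

variable {U V : Type} [Fintype U] [Fintype V] {n : ℕ}

theorem embCongr_apply {W : Type} (σ : Equiv.Perm (Fin n)) (f : W ↪ Fin n) :
    Equiv.embeddingCongr (Equiv.refl W) σ f = f.trans σ.toEmbedding := by
  ext x
  simp [Equiv.embeddingCongr, Function.Embedding.congr]

theorem permAct_single {W : Type} (σ : Equiv.Perm (Fin n)) (f : W ↪ Fin n) (c : ℂ) :
    permAct W n σ (Finsupp.single f c) = Finsupp.single (f.trans σ.toEmbedding) c := by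
  rw [← embCongr_apply σ f]
  simp [permAct]

theorem permAct_apply {W : Type} (σ : Equiv.Perm (Fin n)) (w : (W ↪ Fin n) →₀ ℂ)
    (g : W ↪ Fin n) :
    permAct W n σ w (g.trans σ.toEmbedding) = w g := by
  rw [permAct]
  simp only [LinearEquiv.coe_coe, Finsupp.domLCongr_apply, Finsupp.domCongr_apply]
  rw [← embCongr_apply σ g, Finsupp.equivMapDomain_apply, Equiv.symm_apply_apply]

/-- matrix entry of a linear map between the two permutation modules. -/
noncomputable def ent (T : ((U ↪ Fin n) →₀ ℂ) →ₗ[ℂ] ((V ↪ Fin n) →₀ ℂ))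
    (f : U ↪ Fin n) (g : V ↪ Fin n) : ℂ := T (Finsupp.single f 1) g

theorem lmap_ext1 {T T' : ((U ↪ Fin n) →₀ ℂ) →ₗ[ℂ] ((V ↪ Fin n) →₀ ℂ)}
    (h : ∀ f, T (Finsupp.single f 1) = T' (Finsupp.single f 1)) : T = T' := by
  refine Finsupp.lhom_ext fun f b => ?_
  have hb : (Finsupp.single f b : (U ↪ Fin n) →₀ ℂ) = b • Finsupp.single f 1 := by
    rw [Finsupp.smul_single, smul_eq_mul, mul_one]
  rw [hb, map_smul, map_smul, h]

theorem lmap_ext {T T' : ((U ↪ Fin n) →₀ ℂ) →ₗ[ℂ] ((V ↪ Fin n) →₀ ℂ)}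
    (h : ∀ f g, ent T f g = ent T' f g) : T = T' :=
  lmap_ext1 fun f => Finsupp.ext fun g => h f g

theorem ent_sum {ι : Type*} (s : Finset ι)
    (Ts : ι → (((U ↪ Fin n) →₀ ℂ) →ₗ[ℂ] ((V ↪ Fin n) →₀ ℂ)))
    (f : U ↪ Fin n) (g : V ↪ Fin n) :
    ent (∑ i ∈ s, Ts i) f g = ∑ i ∈ s, ent (Ts i) f g := by
  simp [ent, Finsupp.finset_sum_apply]

theorem ent_smul (a : ℂ) (T : ((U ↪ Fin n) →₀ ℂ) →ₗ[ℂ] ((V ↪ Fin n) →₀ ℂ))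
    (f : U ↪ Fin n) (g : V ↪ Fin n) : ent (a • T) f g = a * ent T f g := by
  simp [ent]

theorem recMap_single (r : Recollement U V) (f : U ↪ Fin n) :
    recMap U V n r (Finsupp.single f 1) =
      ∑ h : r.C ↪ Fin n, if (∀ x, h (r.u x) = f x) then Finsupp.single (r.v.trans h) 1
        else 0 := by
  rw [recMap, Finsupp.lift_apply, Finsupp.sum_single_index] <;> simp

/-- number of embeddings of `r.C` restricting to the pair `(f, g)`. -/
noncomputable def Nm (r : Recollement U V) (f : U ↪ Fin n) (g : V ↪ Fin n) : ℕ :=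
  Fintype.card {h : r.C ↪ Fin n // (∀ x, h (r.u x) = f x) ∧ r.v.trans h = g}

theorem ent_recMap (r : Recollement U V) (f : U ↪ Fin n) (g : V ↪ Fin n) :
    ent (recMap U V n r) f g = (Nm r f g : ℂ) := by
  rw [ent, recMap_single, Finsupp.finset_sum_apply]
  have h1 : ∀ h : r.C ↪ Fin n,
      ((if (∀ x, h (r.u x) = f x) then Finsupp.single (r.v.trans h) (1 : ℂ) else 0) g) =
        if ((∀ x, h (r.u x) = f x) ∧ r.v.trans h = g) then (1 : ℂ) else 0 := by
    intro h
    by_cases hc : ∀ x, h (r.u x) = f x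
    · by_cases hc2 : r.v.trans h = g <;> simp [hc, hc2, Finsupp.single_apply]
    · simp [hc]
  rw [Finset.sum_congr rfl fun h _ => h1 h, Finset.sum_boole, Nm, Fintype.card_subtype]

theorem recMap_comm (r : Recollement U V) (σ : Equiv.Perm (Fin n)) :
    (permAct V n σ).comp (recMap U V n r) = (recMap U V n r).comp (permAct U n σ) := by
  apply lmap_ext1
  intro f
  rw [LinearMap.comp_apply, LinearMap.comp_apply, permAct_single, recMap_single,
    recMap_single, map_sum]
  refine Fintype.sum_equiv (Equiv.embeddingCongr (Equiv.refl r.C) σ) _ _ fun h => ?_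
  rw [embCongr_apply]
  by_cases hc : ∀ x, h (r.u x) = f x
  · rw [if_pos hc, if_pos, permAct_single]
    · rfl
    · intro x
      show σ (h (r.u x)) = σ (f x)
      rw [hc x]
  · rw [if_neg hc, if_neg, map_zero]
    intro hcontra
    refine hc fun x => σ.injective ?_
    exact hcontra x

theorem mem_equivariant_iff {T : ((U ↪ Fin n) →₀ ℂ) →ₗ[ℂ] ((V ↪ Fin n) →₀ ℂ)} :
    T ∈ equivariantMaps U V n ↔
      ∀ σ : Equiv.Perm (Fin n), (permAct V n σ).comp T = T.comp (permAct U n σ) := by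
  simp only [equivariantMaps, Submodule.mem_iInf, LinearMap.mem_eqLocus,
    LinearMap.llcomp_apply', LinearMap.lcomp_apply']

theorem ent_perm {T : ((U ↪ Fin n) →₀ ℂ) →ₗ[ℂ] ((V ↪ Fin n) →₀ ℂ)}
    (hT : ∀ σ : Equiv.Perm (Fin n),
      (permAct V n σ).comp T = T.comp (permAct U n σ))
    (σ : Equiv.Perm (Fin n)) (f : U ↪ Fin n) (g : V ↪ Fin n) :
    ent T (f.trans σ.toEmbedding) (g.trans σ.toEmbedding) = ent T f g := by
  have h := congrArg
    (fun S : ((U ↪ Fin n) →₀ ℂ) →ₗ[ℂ] ((V ↪ Fin n) →₀ ℂ) =>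
      S (Finsupp.single f 1) (g.trans σ.toEmbedding)) (hT σ)
  simp only [LinearMap.comp_apply] at h
  rw [permAct_apply, permAct_single] at h
  rw [ent, ent, ← h]

/-- the recollement associated to a pair of injections. -/
noncomputable def pairRec (f : U ↪ Fin n) (g : V ↪ Fin n) : Recollement U V where
  C := ↥(Set.range ⇑f ∪ Set.range ⇑g)
  fintypeC := ((Set.finite_range ⇑f).union (Set.finite_range ⇑g)).fintype
  u := ⟨fun x => ⟨f x, Or.inl ⟨x, rfl⟩⟩, fun a b h => f.injective (congrArg Subtype.val h)⟩
  v := ⟨fun y => ⟨g y, Or.inr ⟨y, rfl⟩⟩, fun a b h => g.injective (congrArg Subtype.val h)⟩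
  covers := by
    rintro ⟨c, hc⟩
    rcases hc with ⟨x, hx⟩ | ⟨y, hy⟩
    · exact Or.inl ⟨x, Subtype.ext hx⟩
    · exact Or.inr ⟨y, Subtype.ext hy⟩

theorem nm_ne_zero {r : Recollement U V} {f : U ↪ Fin n} {g : V ↪ Fin n}
    (h : (pairRec f g).Equivalent r) : Nm r f g ≠ 0 := by
  obtain ⟨e, h1, h2⟩ := h
  rw [Nm, ← Nat.pos_iff_ne_zero, Fintype.card_pos_iff]
  refine ⟨⟨e.symm.toEmbedding.trans (Function.Embedding.subtype _), fun x => ?_, ?_⟩⟩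
  · have he : e.symm (r.u x) = (pairRec f g).u x := by
      rw [Equiv.symm_apply_eq]; exact (h1 x).symm
    erw [Function.Embedding.trans_apply, Equiv.toEmbedding_apply, he]
    rfl
  · ext y
    have he : e.symm (r.v y) = (pairRec f g).v y := by
      rw [Equiv.symm_apply_eq]; exact (h2 y).symm
    erw [Function.Embedding.trans_apply, Function.Embedding.trans_apply,
      Equiv.toEmbedding_apply, he]
    rfl

theorem equiv_of_nm_ne_zero {r : Recollement U V} {f : U ↪ Fin n} {g : V ↪ Fin n}
    (hnm : Nm r f g ≠ 0) : (pairRec f g).Equivalent r := by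
  rw [Nm, ← Nat.pos_iff_ne_zero, Fintype.card_pos_iff] at hnm
  obtain ⟨⟨h, hu, hv⟩⟩ := hnm
  have hv' : ∀ y, h (r.v y) = g y := fun y => DFunLike.congr_fun hv y
  have hrange : Set.range ⇑h = Set.range ⇑f ∪ Set.range ⇑g := by
    apply Set.Subset.antisymm
    · rintro _ ⟨c, rfl⟩
      rcases r.covers c with ⟨x, rfl⟩ | ⟨y, rfl⟩
      · exact Or.inl ⟨x, (hu x).symm⟩
      · exact Or.inr ⟨y, (hv' y).symm⟩
    · rintro c (⟨x, rfl⟩ | ⟨y, rfl⟩)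
      · exact ⟨r.u x, hu x⟩
      · exact ⟨r.v y, hv' y⟩
  let e : r.C ≃ ↥(Set.range ⇑f ∪ Set.range ⇑g) :=
    (Equiv.ofInjective ⇑h h.injective).trans (Equiv.setCongr hrange)
  refine ⟨e.symm, fun x => ?_, fun y => ?_⟩
  · erw [Equiv.symm_apply_eq]
    apply Subtype.ext
    show (f x : Fin n) = ((e (r.u x) : _) : Fin n)
    simp [e, Equiv.ofInjective, hu x]
  · erw [Equiv.symm_apply_eq]
    apply Subtype.ext
    show (g y : Fin n) = ((e (r.v y) : _) : Fin n)
    simp [e, Equiv.ofInjective, hv' y]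

theorem exists_perm_of_equiv {f f' : U ↪ Fin n} {g g' : V ↪ Fin n}
    (h : (pairRec f g).Equivalent (pairRec f' g')) :
    ∃ σ : Equiv.Perm (Fin n), f.trans σ.toEmbedding = f' ∧ g.trans σ.toEmbedding = g' := by
  obtain ⟨e, h1, h2⟩ := h
  let e' : (↥(Set.range ⇑f ∪ Set.range ⇑g) : Type) ≃ ↥(Set.range ⇑f' ∪ Set.range ⇑g') := e
  have hcard :
      Fintype.card (↥((Set.range ⇑f ∪ Set.range ⇑g)ᶜ : Set (Fin n)) : Type) =
      Fintype.card (↥((Set.range ⇑f' ∪ Set.range ⇑g')ᶜ : Set (Fin n)) : Type) := by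
    rw [Fintype.card_compl_set, Fintype.card_compl_set, Fintype.card_congr e']
  obtain ⟨σ, hσ⟩ := (Equiv.Set.compl e').symm (Fintype.equivOfCardEq hcard)
  refine ⟨σ, DFunLike.ext _ _ fun x => ?_, DFunLike.ext _ _ fun y => ?_⟩
  · have h3 := hσ ((pairRec f g).u x)
    rw [show e' ((pairRec f g).u x) = (pairRec f' g').u x from h1 x] at h3
    exact h3
  · have h3 := hσ ((pairRec f g).v y)
    rw [show e' ((pairRec f g).v y) = (pairRec f' g').v y from h2 y] at h3
    exact h3

end Stmt6Aux

set_option maxHeartbeats 1000000 in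
open Stmt6Aux in
open scoped Classical in
/-- (i) Each map `(C)` is a morphism of `S_n`-representations;
(ii) as `(C, u, v)` ranges over a set `R` of representatives of the equivalence classes
of recollements of `(U, V)`, the maps `(C)` span the space of `S_n`-equivariant linear
maps `ℂ[Inj(U, Fin n)] → ℂ[Inj(V, Fin n)]`; (iii) if `n > |U| + |V|` they are moreover
linearly independent (hence form a basis of that space). -/
theorem stmt6 (U V : Type) [Fintype U] [Fintype V] (n : ℕ)
    (R : Set (Recollement U V))
    (hR : ∀ P : Recollement U V, ∃! r : R, P.Equivalent r.1) :
    (∀ (r : Recollement U V) (σ : Equiv.Perm (Fin n)),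
        (permAct V n σ).comp (recMap U V n r) =
          (recMap U V n r).comp (permAct U n σ)) ∧
      (Submodule.span ℂ (Set.range fun r : R => recMap U V n r.1) =
        equivariantMaps U V n) ∧
      (Fintype.card U + Fintype.card V < n →
        LinearIndependent ℂ fun r : R => recMap U V n r.1) := by
  refine ⟨fun r σ => recMap_comm r σ, ?_, ?_⟩
  · -- span
    apply le_antisymm
    · rw [Submodule.span_le]
      rintro _ ⟨r, rfl⟩
      rw [SetLike.mem_coe, mem_equivariant_iff]
      exact fun σ => recMap_comm r.1 σ
    · intro T hT
      rw [mem_equivariant_iff] at hT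
      set c : R → ℂ := fun r =>
        if hp : ∃ p : (U ↪ Fin n) × (V ↪ Fin n), (pairRec p.1 p.2).Equivalent r.1
        then ent T hp.choose.1 hp.choose.2 / (Nm r.1 hp.choose.1 hp.choose.2 : ℂ)
        else 0 with hc
      set F : Finset R := Finset.image (fun p : (U ↪ Fin n) × (V ↪ Fin n) =>
        (hR (pairRec p.1 p.2)).choose) Finset.univ with hF
      have key : T = ∑ r ∈ F, c r • recMap U V n r.1 := by
        apply lmap_ext
        intro f g
        set r₀ : R := (hR (pairRec f g)).choose with hr₀
        have hr₀e : (pairRec f g).Equivalent r₀.1 := (hR (pairRec f g)).choose_spec.1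
        have huniq : ∀ r' : R, (pairRec f g).Equivalent r'.1 → r' = r₀ :=
          (hR (pairRec f g)).choose_spec.2
        have hsum : ent (∑ r ∈ F, c r • recMap U V n r.1) f g =
            c r₀ * ent (recMap U V n r₀.1) f g := by
          rw [ent_sum]
          rw [Finset.sum_eq_single r₀]
          · rw [ent_smul]
          · intro r hr hne
            rw [ent_smul]
            have hz : ent (recMap U V n r.1) f g = 0 := by
              by_contra hz
              rw [ent_recMap] at hz
              exact hne (huniq r (equiv_of_nm_ne_zero (by exact_mod_cast hz)))
            rw [hz, mul_zero]
          · intro hn0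
            exact absurd (Finset.mem_image.mpr ⟨(f, g), Finset.mem_univ _, rfl⟩) hn0
        rw [hsum]
        have hp : ∃ p : (U ↪ Fin n) × (V ↪ Fin n), (pairRec p.1 p.2).Equivalent r₀.1 :=
          ⟨(f, g), hr₀e⟩
        have hcr : c r₀ = ent T hp.choose.1 hp.choose.2 /
            (Nm r₀.1 hp.choose.1 hp.choose.2 : ℂ) := by
          rw [hc]; exact dif_pos hp
        have hp₀ : (pairRec hp.choose.1 hp.choose.2).Equivalent r₀.1 := hp.choose_spec
        have hpe : (pairRec hp.choose.1 hp.choose.2).Equivalent (pairRec f g) :=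
          equivalent_trans hp₀ (equivalent_symm hr₀e)
        obtain ⟨σ, hσf, hσg⟩ := exists_perm_of_equiv hpe
        have h1 : ent T f g = ent T hp.choose.1 hp.choose.2 := by
          rw [← hσf, ← hσg, ent_perm hT]
        have h2 : ent (recMap U V n r₀.1) f g =
            (Nm r₀.1 hp.choose.1 hp.choose.2 : ℂ) := by
          rw [← hσf, ← hσg, ent_perm (fun σ' => recMap_comm r₀.1 σ'), ent_recMap]
        have hnz : (Nm r₀.1 hp.choose.1 hp.choose.2 : ℂ) ≠ 0 :=
          Nat.cast_ne_zero.mpr (nm_ne_zero hp₀)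
        rw [hcr, h2, h1, div_mul_cancel₀ _ hnz]
      rw [key]
      exact Submodule.sum_mem _ fun r hr =>
        Submodule.smul_mem _ _ (Submodule.subset_span ⟨r, rfl⟩)
  · -- linear independence
    intro hn
    refine (linearIndependent_iff' (R := ℂ)
      (v := fun r : R => recMap U V n r.1)).mpr ?_
    intro s a hsum i hi
    -- r.C embeds into Fin n
    have hcard : Fintype.card i.1.C ≤ Fintype.card U + Fintype.card V := by
      have hsurj : Function.Surjective (Sum.elim ⇑i.1.u ⇑i.1.v : U ⊕ V → i.1.C) := by
        intro c
        rcases i.1.covers c with ⟨x, hx⟩ | ⟨y, hy⟩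
        · exact ⟨Sum.inl x, hx⟩
        · exact ⟨Sum.inr y, hy⟩
      have := Fintype.card_le_of_surjective _ hsurj
      simpa using this
    obtain ⟨h⟩ : Nonempty (i.1.C ↪ Fin n) := by
      apply Function.Embedding.nonempty_of_card_le
      simp only [Fintype.card_fin]
      omega
    set f : U ↪ Fin n := i.1.u.trans h with hfdef
    set g : V ↪ Fin n := i.1.v.trans h with hgdef
    have hnm : Nm i.1 f g ≠ 0 := by
      rw [Nm, ← Nat.pos_iff_ne_zero, Fintype.card_pos_iff]
      exact ⟨⟨h, fun x => rfl, rfl⟩⟩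
    have hequiv : (pairRec f g).Equivalent i.1 := equiv_of_nm_ne_zero hnm
    have h0 := congrArg (fun S => ent S f g) hsum
    simp only [ent_sum, ent_smul] at h0
    rw [Finset.sum_eq_single i] at h0
    · have hent0 : ent (0 : ((U ↪ Fin n) →₀ ℂ) →ₗ[ℂ] ((V ↪ Fin n) →₀ ℂ)) f g = 0 := by
        simp [ent]
      rw [hent0] at h0
      rcases mul_eq_zero.mp h0 with h' | h'
      · exact h'
      · exact absurd h' (by rw [ent_recMap]; exact Nat.cast_ne_zero.mpr hnm)
    · intro j hj hji
      have hz : ent (recMap U V n j.1) f g = 0 := by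
        by_contra hz
        rw [ent_recMap] at hz
        have hj' : (pairRec f g).Equivalent j.1 :=
          equiv_of_nm_ne_zero (by exact_mod_cast hz)
        have := ((hR (pairRec f g)).unique hj' hequiv : j = i)
        exact hji this
      rw [hz, mul_zero]
    · intro hni
      exact absurd hi hni
end

section
/- Let U, V, W be finite sets, and fix a set R of representatives of the equivalence classes of recollements of the pair (U, W). For any recollement C of (U, V) and any recollement D of (V, W), there exists a family of polynomials P^E_{C,D} ∈ ℤ[T], indexed by E ∈ R, such that for every n ∈ ℕ the composite (D) ∘ (C) : ℂ[Inj(U, Fin n)] → ℂ[Inj(W, Fin n)] equals the sum over E ∈ R of P^E_{C,D}(n) · (E). Here, for a recollement (C, u, v) of two finite sets U', V', the map (C) : ℂ[Inj(U', Fin n)] → ℂ[Inj(V', Fin n)] sends e_f to the sum of e_{h∘v} over all h ∈ Inj(C, Fin n) with h ∘ u = f. -/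
open Function
open scoped Classical

section ExtCount

variable {Q S : Type} [Fintype Q] [Fintype S] {n : ℕ}

private noncomputable def extEquiv (ι : S ↪ Q) (j : S ↪ Fin n) :
    {ψ : Q ↪ Fin n // ∀ t, ψ (ι t) = j t} ≃
      ({q : Q // q ∉ Set.range ι} ↪ {v : Fin n // v ∉ Set.range j}) where
  toFun ψ := ⟨fun q => ⟨ψ.1 q.1, by
      rintro ⟨t, ht⟩
      exact q.2 ⟨t, ψ.1.injective (by rw [ψ.2 t, ht])⟩⟩,
    fun a b hab => Subtype.ext (ψ.1.injective (congrArg Subtype.val hab))⟩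
  invFun χ := ⟨⟨fun q => if h : ∃ t, ι t = q then j h.choose else χ ⟨q, by
        simpa [Set.range] using h⟩, by
      intro a b hab
      dsimp only at hab
      split_ifs at hab with h1 h2 h2
      · rw [← h1.choose_spec, ← h2.choose_spec, j.injective hab]
      · exact absurd ⟨h1.choose, hab⟩ (χ ⟨b, _⟩).2
      · exact absurd ⟨h2.choose, hab.symm⟩ (χ ⟨a, _⟩).2
      · simpa using χ.injective (Subtype.ext hab)⟩, by
    intro t
    have h : ∃ t', ι t' = ι t := ⟨t, rfl⟩
    show (if h : ∃ t', ι t' = ι t then j h.choose else _) = j t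
    rw [dif_pos h]
    rw [ι.injective h.choose_spec]⟩
  left_inv := by
    rintro ⟨ψ, hψ⟩
    ext q
    show ((if h : ∃ t, ι t = q then j h.choose else _ : Fin n) : ℕ) = ψ q
    split_ifs with h
    · conv_rhs => rw [← h.choose_spec]
      exact congrArg Fin.val (hψ _).symm
    · rfl
  right_inv := by
    intro χ
    ext q
    have : ¬ ∃ t, ι t = q.1 := by simpa [Set.range] using q.2
    simp only [Embedding.coeFn_mk, dif_neg this]
    show ((if h : ∃ t, ι t = q.1 then j h.choose else _ : Fin n) : ℕ) = _
    rw [dif_neg this]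

lemma card_extend_emb (ι : S ↪ Q) (j : S ↪ Fin n) :
    Nat.card {ψ : Q ↪ Fin n // ∀ t, ψ (ι t) = j t} =
      (n - Fintype.card S).descFactorial (Fintype.card Q - Fintype.card S) := by
  rw [Nat.card_congr (extEquiv ι j), Nat.card_eq_fintype_card, Fintype.card_embedding_eq]
  have h1 : Fintype.card {q : Q // q ∉ Set.range ι} = Fintype.card Q - Fintype.card S := by
    rw [Fintype.card_subtype_compl]
    congr 1
    exact (Fintype.card_congr (Equiv.ofInjective ι ι.injective)).symm
  have h2 : Fintype.card {v : Fin n // v ∉ Set.range j} = n - Fintype.card S := by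
    rw [Fintype.card_subtype_compl, Fintype.card_fin]
    congr 1
    exact (Fintype.card_congr (Equiv.ofInjective j j.injective)).symm
  rw [h1, h2]

lemma card_extend_emb' {Q S : Type} [Finite Q] [Finite S] {n : ℕ} (ι : S ↪ Q) (j : S ↪ Fin n) :
    Nat.card {ψ : Q ↪ Fin n // ∀ t, ψ (ι t) = j t} =
      (n - Nat.card S).descFactorial (Nat.card Q - Nat.card S) := by
  cases nonempty_fintype Q
  cases nonempty_fintype S
  rw [card_extend_emb ι j, Nat.card_eq_fintype_card, Nat.card_eq_fintype_card]

end ExtCount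

section Main

variable {U V W : Type} [Fintype U] [Fintype V] [Fintype W]
variable (C : Recollement U V) (D : Recollement V W)

def Good (r : C.C ⊕ D.C → C.C ⊕ D.C → Bool) : Prop :=
  Equivalence (fun a b => r a b = true) ∧
  (∀ a b, r (.inl a) (.inl b) = true → a = b) ∧
  (∀ a b, r (.inr a) (.inr b) = true → a = b) ∧
  (∀ y : V, r (.inl (C.v y)) (.inr (D.u y)) = true)

def Compat {n : ℕ} (r : C.C ⊕ D.C → C.C ⊕ D.C → Bool) (f : U ↪ Fin n) (g : W ↪ Fin n) : Prop :=
  ∀ x y, r (.inl (C.u x)) (.inr (D.v y)) = true ↔ f x = g y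

noncomputable def ncl (r : C.C ⊕ D.C → C.C ⊕ D.C → Bool) : ℕ :=
  if hr : Equivalence (fun a b => r a b = true) then Nat.card (Quotient (Setoid.mk _ hr)) else 0

lemma fiber_card_eq {n : ℕ} (f : U ↪ Fin n) (g : W ↪ Fin n)
    (r : C.C ⊕ D.C → C.C ⊕ D.C → Bool) (hG : Good C D r) (hC : Compat C D r f g) :
    Nat.card {p : (C.C ↪ Fin n) × (D.C ↪ Fin n) //
      ((∀ x, p.1 (C.u x) = f x) ∧ (∀ y, p.2 (D.u y) = p.1 (C.v y)) ∧ (∀ y, p.2 (D.v y) = g y)) ∧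
      (∀ a b, (Sum.elim ⇑p.1 ⇑p.2 a = Sum.elim ⇑p.1 ⇑p.2 b) ↔ r a b = true)} =
      (n - Nat.card ↥(Set.range ⇑f ∪ Set.range ⇑g)).descFactorial
        (ncl C D r - Nat.card ↥(Set.range ⇑f ∪ Set.range ⇑g)) := by
  obtain ⟨hEq, hIL, hIR, hV⟩ := hG
  set s : Setoid (C.C ⊕ D.C) := Setoid.mk _ hEq with hs
  -- Step 1: the equivalence with embeddings of the quotient
  have E1 : {p : (C.C ↪ Fin n) × (D.C ↪ Fin n) //
      ((∀ x, p.1 (C.u x) = f x) ∧ (∀ y, p.2 (D.u y) = p.1 (C.v y)) ∧ (∀ y, p.2 (D.v y) = g y)) ∧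
      (∀ a b, (Sum.elim ⇑p.1 ⇑p.2 a = Sum.elim ⇑p.1 ⇑p.2 b) ↔ r a b = true)} ≃
      {ψ : Quotient s ↪ Fin n //
        (∀ x, ψ (Quotient.mk s (.inl (C.u x))) = f x) ∧
        (∀ y, ψ (Quotient.mk s (.inr (D.v y))) = g y)} := by
    refine
      { toFun := fun p => ⟨⟨Quotient.lift (Sum.elim ⇑p.1.1 ⇑p.1.2)
          (fun a b hab => (p.2.2 a b).2 hab), ?_⟩, fun x => p.2.1.1 x, fun y => p.2.1.2.2 y⟩
        invFun := fun ψ => ⟨(⟨fun c => ψ.1 (Quotient.mk s (.inl c)), ?_⟩,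
            ⟨fun d => ψ.1 (Quotient.mk s (.inr d)), ?_⟩), ⟨⟨fun x => ψ.2.1 x, fun y => ?_, fun y => ψ.2.2 y⟩, ?_⟩⟩
        left_inv := ?_
        right_inv := ?_ }
    · -- injectivity of lifted map
      rintro ⟨a⟩ ⟨b⟩ hab
      exact Quotient.sound ((p.2.2 a b).1 hab)
    · intro a b hab
      exact hIL a b (Quotient.exact (ψ.1.injective hab))
    · intro a b hab
      exact hIR a b (Quotient.exact (ψ.1.injective hab))
    · -- middle compatibility
      show ψ.1 (Quotient.mk s (.inr (D.u y))) = ψ.1 (Quotient.mk s (.inl (C.v y)))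
      exact (congrArg ψ.1 (Quotient.sound (hV y))).symm
    · -- pat condition
      intro a b
      constructor
      · intro hab
        have : (Quotient.mk s a) = (Quotient.mk s b) := by
          apply ψ.1.injective
          cases a <;> cases b <;> exact hab
        exact Quotient.exact this
      · intro hab
        have : (Quotient.mk s a) = (Quotient.mk s b) := Quotient.sound hab
        cases a <;> cases b <;> exact congrArg ψ.1 this
    · rintro ⟨⟨h, k⟩, hp⟩
      refine Subtype.ext (Prod.ext ?_ ?_) <;> exact Embedding.ext fun c => rfl
    · rintro ⟨ψ, hψ⟩
      refine Subtype.ext (Embedding.ext ?_)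
      rintro ⟨a⟩
      cases a <;> rfl
  rw [Nat.card_congr E1]
  -- Step 2: the prescription embedding
  have hmem : ∀ t : ↥(Set.range ⇑f ∪ Set.range ⇑g), (¬ ∃ x, f x = t.1) → ∃ y, g y = t.1 := by
    rintro ⟨t, ht | ht⟩ h
    · exact absurd ⟨ht.choose, ht.choose_spec⟩ h
    · exact ⟨ht.choose, ht.choose_spec⟩
  set Φ₀ : ↥(Set.range ⇑f ∪ Set.range ⇑g) → Quotient s := fun t =>
    if h : ∃ x, f x = t.1 then Quotient.mk s (.inl (C.u h.choose))
    else Quotient.mk s (.inr (D.v (hmem t h).choose)) with hΦ₀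
  have key : ∀ (x : U) (y : W),
      Quotient.mk s (Sum.inl (C.u x)) = Quotient.mk s (Sum.inr (D.v y)) ↔ f x = g y := fun x y =>
    ⟨fun h => (hC x y).1 (Quotient.exact h), fun h => Quotient.sound ((hC x y).2 h)⟩
  have hΦinj : Function.Injective Φ₀ := by
    rintro t t' h
    rw [hΦ₀] at h
    dsimp only at h
    split_ifs at h with h1 h2 h2
    · have h3 := C.u.injective (hIL _ _ (Quotient.exact h))
      exact Subtype.ext (by rw [← h1.choose_spec, ← h2.choose_spec, h3])
    · have h3 := (key _ _).1 h
      exact Subtype.ext (by rw [← h1.choose_spec, ← (hmem t' h2).choose_spec, h3])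
    · have h3 := (key _ _).1 h.symm
      exact Subtype.ext (by rw [← (hmem t h1).choose_spec, ← h2.choose_spec, h3])
    · have h3 := D.v.injective (hIR _ _ (Quotient.exact h))
      exact Subtype.ext (by rw [← (hmem t h1).choose_spec, ← (hmem t' h2).choose_spec, h3])
  set ι : ↥(Set.range ⇑f ∪ Set.range ⇑g) ↪ Quotient s := ⟨Φ₀, hΦinj⟩ with hι
  set j : ↥(Set.range ⇑f ∪ Set.range ⇑g) ↪ Fin n := ⟨Subtype.val, Subtype.val_injective⟩ with hj
  have hΦcond : ∀ ψ : Quotient s ↪ Fin n,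
      ((∀ x, ψ (Quotient.mk s (.inl (C.u x))) = f x) ∧
        (∀ y, ψ (Quotient.mk s (.inr (D.v y))) = g y)) ↔ (∀ t, ψ (ι t) = j t) := by
    intro ψ
    constructor
    · rintro ⟨hf, hg⟩ t
      show ψ (Φ₀ t) = t.1
      rw [hΦ₀]
      dsimp only
      split_ifs with h1
      · rw [hf, h1.choose_spec]
      · rw [hg, (hmem t h1).choose_spec]
    · intro hall
      constructor
      · intro x
        have h1 : ∃ x', f x' = (⟨f x, Or.inl ⟨x, rfl⟩⟩ : ↥(Set.range ⇑f ∪ Set.range ⇑g)).1 :=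
          ⟨x, rfl⟩
        have h2 := hall ⟨f x, Or.inl ⟨x, rfl⟩⟩
        rw [hι] at h2
        simp only [Embedding.coeFn_mk, hΦ₀] at h2
        rw [dif_pos h1] at h2
        have h3 : h1.choose = x := f.injective h1.choose_spec
        rw [h3] at h2
        exact h2
      · intro y
        have h2 := hall ⟨g y, Or.inr ⟨y, rfl⟩⟩
        rw [hι] at h2
        simp only [Embedding.coeFn_mk, hΦ₀] at h2
        by_cases h1 : ∃ x, f x = (⟨g y, Or.inr ⟨y, rfl⟩⟩ : ↥(Set.range ⇑f ∪ Set.range ⇑g)).1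
        · rw [dif_pos h1] at h2
          have h3 : f h1.choose = g y := h1.choose_spec
          rw [← congrArg ψ ((key h1.choose y).2 h3)]
          exact h2
        · rw [dif_neg h1] at h2
          have h3 : (hmem _ h1).choose = y := g.injective (hmem _ h1).choose_spec
          rw [h3] at h2
          exact h2
  rw [Nat.card_congr (Equiv.subtypeEquivRight hΦcond), card_extend_emb' ι j]
  rw [ncl, dif_pos hEq]
lemma fiber_empty {n : ℕ} (f : U ↪ Fin n) (g : W ↪ Fin n)
    (r : C.C ⊕ D.C → C.C ⊕ D.C → Bool) (h : ¬ (Good C D r ∧ Compat C D r f g)) :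
    Nat.card {p : (C.C ↪ Fin n) × (D.C ↪ Fin n) //
      ((∀ x, p.1 (C.u x) = f x) ∧ (∀ y, p.2 (D.u y) = p.1 (C.v y)) ∧ (∀ y, p.2 (D.v y) = g y)) ∧
      (∀ a b, (Sum.elim ⇑p.1 ⇑p.2 a = Sum.elim ⇑p.1 ⇑p.2 b) ↔ r a b = true)} = 0 := by
  rw [Nat.card_eq_zero]
  left
  constructor
  rintro ⟨⟨h₁, k⟩, ⟨hf, hm, hg⟩, hpat⟩
  refine h ⟨⟨⟨fun a => (hpat a a).1 rfl, fun {a b} hab => (hpat b a).1 ((hpat a b).2 hab).symm,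
      fun {a b c} hab hbc => (hpat a c).1 (((hpat a b).2 hab).trans ((hpat b c).2 hbc))⟩,
    fun a b hab => h₁.injective ((hpat _ _).2 hab),
    fun a b hab => k.injective ((hpat _ _).2 hab),
    fun y => (hpat _ _).1 (hm y).symm⟩, fun x y => ?_⟩
  rw [← hpat]
  show h₁ (C.u x) = k (D.v y) ↔ f x = g y
  rw [hf, hg]

def compatibleE (E : Recollement U W) (r : C.C ⊕ D.C → C.C ⊕ D.C → Bool) : Prop :=
  ∀ x y, r (.inl (C.u x)) (.inr (D.v y)) = true ↔ E.u x = E.v y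

lemma count_pairs {n : ℕ} (f : U ↪ Fin n) (g : W ↪ Fin n) :
    Nat.card {p : (C.C ↪ Fin n) × (D.C ↪ Fin n) //
      (∀ x, p.1 (C.u x) = f x) ∧ (∀ y, p.2 (D.u y) = p.1 (C.v y)) ∧ (∀ y, p.2 (D.v y) = g y)} =
    ∑ r ∈ Finset.univ.filter (fun r => Good C D r ∧ Compat C D r f g),
      (n - Nat.card ↥(Set.range ⇑f ∪ Set.range ⇑g)).descFactorial
        (ncl C D r - Nat.card ↥(Set.range ⇑f ∪ Set.range ⇑g)) := by
  set pat : ((C.C ↪ Fin n) × (D.C ↪ Fin n)) → (C.C ⊕ D.C → C.C ⊕ D.C → Bool) :=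
    fun p a b => decide (Sum.elim ⇑p.1 ⇑p.2 a = Sum.elim ⇑p.1 ⇑p.2 b) with hpatdef
  have hpat : ∀ p r, (pat p = r) ↔
      ∀ a b, (Sum.elim ⇑p.1 ⇑p.2 a = Sum.elim ⇑p.1 ⇑p.2 b ↔ r a b = true) := by
    intro p r
    constructor
    · intro h a b
      rw [← h, hpatdef]
      simp
    · intro h
      funext a b
      rw [hpatdef]
      simp only [decide_eq_true_eq]
      cases hr : r a b
      · simpa [hr] using h a b
      · simpa [hr] using h a b
  rw [Nat.card_eq_fintype_card, Fintype.card_subtype,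
    Finset.card_eq_sum_card_fiberwise (f := pat) (t := Finset.univ) (fun _ _ => Finset.mem_univ _)]
  have step : ∀ r, (Finset.filter (fun p => pat p = r)
      (Finset.filter (fun p : (C.C ↪ Fin n) × (D.C ↪ Fin n) =>
        (∀ x, p.1 (C.u x) = f x) ∧ (∀ y, p.2 (D.u y) = p.1 (C.v y)) ∧ (∀ y, p.2 (D.v y) = g y))
        Finset.univ)).card =
      if Good C D r ∧ Compat C D r f g then
        (n - Nat.card ↥(Set.range ⇑f ∪ Set.range ⇑g)).descFactorial
          (ncl C D r - Nat.card ↥(Set.range ⇑f ∪ Set.range ⇑g)) else 0 := by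
    intro r
    rw [Finset.filter_filter]
    have : (Finset.filter (fun p : (C.C ↪ Fin n) × (D.C ↪ Fin n) =>
        ((∀ x, p.1 (C.u x) = f x) ∧ (∀ y, p.2 (D.u y) = p.1 (C.v y)) ∧
          (∀ y, p.2 (D.v y) = g y)) ∧ pat p = r) Finset.univ).card =
        Nat.card {p : (C.C ↪ Fin n) × (D.C ↪ Fin n) //
          ((∀ x, p.1 (C.u x) = f x) ∧ (∀ y, p.2 (D.u y) = p.1 (C.v y)) ∧
            (∀ y, p.2 (D.v y) = g y)) ∧
          (∀ a b, (Sum.elim ⇑p.1 ⇑p.2 a = Sum.elim ⇑p.1 ⇑p.2 b) ↔ r a b = true)} := by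
      rw [Nat.card_eq_fintype_card, Fintype.card_subtype]
      congr 1
      apply Finset.filter_congr
      intro p _
      rw [hpat p r]
    rw [this]
    split_ifs with hgc
    · exact fiber_card_eq C D f g r hgc.1 hgc.2
    · exact fiber_empty C D f g r hgc
  rw [Finset.sum_congr rfl (fun r _ => step r), Finset.sum_ite, Finset.sum_const_zero, add_zero]



lemma prod_eval_descFactorial (e m n : ℕ) (hn : e ≤ n) :
    ∏ i ∈ Finset.range m, ((n : ℤ) - e - i) = ((n - e).descFactorial m : ℤ) := by
  set d := n - e with hd
  have hne : (n : ℤ) - e = d := by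
    rw [hd]; push_cast [hn]; ring
  rcases le_or_gt m d with hm | hm
  · rw [Nat.descFactorial_eq_prod_range]
    push_cast
    refine Finset.prod_congr rfl fun i hi => ?_
    rw [Finset.mem_range] at hi
    rw [hne, Nat.cast_sub (le_of_lt (lt_of_lt_of_le hi hm))]
  · rw [Nat.descFactorial_eq_zero_iff_lt.mpr hm, Nat.cast_zero]
    refine Finset.prod_eq_zero (Finset.mem_range.mpr hm) ?_
    rw [hne]; ring

noncomputable def Ppoly (E : Recollement U W) : Polynomial ℤ :=
  ∑ r ∈ Finset.univ.filter (fun r => Good C D r ∧ compatibleE C D E r),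
    ∏ i ∈ Finset.range (ncl C D r - Fintype.card E.C),
      (Polynomial.X - Polynomial.C ((Fintype.card E.C : ℤ) + i))

lemma Ppoly_eval {n : ℕ} (E : Recollement U W) (hn : Fintype.card E.C ≤ n) :
    (Ppoly C D E).eval (n : ℤ) =
      ∑ r ∈ Finset.univ.filter (fun r => Good C D r ∧ compatibleE C D E r),
        ((n - Fintype.card E.C).descFactorial (ncl C D r - Fintype.card E.C) : ℤ) := by
  rw [Ppoly, Polynomial.eval_finset_sum]
  refine Finset.sum_congr rfl fun r _ => ?_
  rw [Polynomial.eval_prod, ← prod_eval_descFactorial _ _ _ hn]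
  refine Finset.prod_congr rfl fun i _ => ?_
  simp [sub_sub]

lemma recMap_single_apply {U' V' : Type} [Fintype U'] [Fintype V'] (n : ℕ) (r : Recollement U' V')
    (f : U' ↪ Fin n) (g : V' ↪ Fin n) :
    (recMap U' V' n r) (Finsupp.single f 1) g =
      (Nat.card {h : r.C ↪ Fin n // (∀ x, h (r.u x) = f x) ∧ (∀ y, h (r.v y) = g y)} : ℂ) := by
  rw [recMap, Finsupp.lift_apply, Finsupp.sum_single_index (by simp), one_smul,
    Finsupp.finset_sum_apply]
  have key : ∀ h : r.C ↪ Fin n,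
      (if (∀ x, h (r.u x) = f x) then Finsupp.single (r.v.trans h) (1:ℂ) else 0) g
        = if (∀ x, h (r.u x) = f x) ∧ (∀ y, h (r.v y) = g y) then 1 else 0 := by
    intro h
    have htv : (r.v.trans h = g) ↔ ∀ y, h (r.v y) = g y :=
      ⟨fun he y => by rw [← he]; rfl, fun hy => DFunLike.ext _ _ fun y => hy y⟩
    rw [apply_ite (fun φ : (V' ↪ Fin n) →₀ ℂ => φ g), Finsupp.single_apply, Finsupp.coe_zero,
      Pi.zero_apply, ite_and]
    simp only [htv]
  rw [Finset.sum_congr rfl fun h _ => key h, Finset.sum_boole, Nat.card_eq_fintype_card,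
    Fintype.card_subtype]

lemma comp_single_apply {n : ℕ} (f : U ↪ Fin n) (g : W ↪ Fin n) :
    ((recMap V W n D).comp (recMap U V n C)) (Finsupp.single f 1) g =
      (Nat.card {p : (C.C ↪ Fin n) × (D.C ↪ Fin n) //
        (∀ x, p.1 (C.u x) = f x) ∧ (∀ y, p.2 (D.u y) = p.1 (C.v y)) ∧
          (∀ y, p.2 (D.v y) = g y)} : ℂ) := by
  rw [LinearMap.comp_apply]
  have inner : (recMap U V n C) (Finsupp.single f 1)
      = ∑ h : C.C ↪ Fin n,
          if (∀ x, h (C.u x) = f x) then Finsupp.single (C.v.trans h) (1:ℂ) else 0 := by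
    rw [recMap, Finsupp.lift_apply, Finsupp.sum_single_index (by simp), one_smul]
  rw [inner, map_sum, Finsupp.finset_sum_apply]
  have key : ∀ h : C.C ↪ Fin n,
      ((recMap V W n D) (if (∀ x, h (C.u x) = f x)
          then Finsupp.single (C.v.trans h) (1:ℂ) else 0)) g
      = ∑ k : D.C ↪ Fin n, if ((∀ x, h (C.u x) = f x) ∧ (∀ y, k (D.u y) = h (C.v y)) ∧
          (∀ y, k (D.v y) = g y)) then (1:ℂ) else 0 := by
    intro h
    by_cases h1 : ∀ x, h (C.u x) = f x
    · rw [if_pos h1]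
      have expand : (recMap V W n D) (Finsupp.single (C.v.trans h) 1)
          = ∑ k : D.C ↪ Fin n, if (∀ y, k (D.u y) = (C.v.trans h) y)
              then Finsupp.single (D.v.trans k) (1:ℂ) else 0 := by
        rw [recMap, Finsupp.lift_apply, Finsupp.sum_single_index (by simp), one_smul]
      rw [expand, Finsupp.finset_sum_apply]
      refine Finset.sum_congr rfl fun k _ => ?_
      have htv : (D.v.trans k = g) ↔ ∀ y, k (D.v y) = g y :=
        ⟨fun he y => by rw [← he]; rfl, fun hy => DFunLike.ext _ _ fun y => hy y⟩
      rw [apply_ite (fun φ : (W ↪ Fin n) →₀ ℂ => φ g), Finsupp.single_apply, Finsupp.coe_zero,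
        Pi.zero_apply, ite_and]
      have htrans : (∀ y, k (D.u y) = (C.v.trans h) y) ↔ (∀ y, k (D.u y) = h (C.v y)) :=
        Iff.rfl
      simp [htv, htrans, h1, ite_and]
    · rw [if_neg h1, map_zero, Finsupp.coe_zero, Pi.zero_apply]
      symm
      refine Finset.sum_eq_zero fun k _ => ?_
      rw [if_neg]
      tauto
  rw [Finset.sum_congr rfl fun h _ => key h, ← Finset.sum_product']
  rw [Finset.univ_product_univ, Finset.sum_boole, Nat.card_eq_fintype_card,
    Fintype.card_subtype]

end Main

section RecOf

variable {U W : Type} {n : ℕ}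

noncomputable def recOf (f : U ↪ Fin n) (g : W ↪ Fin n) : Recollement U W where
  C := ↥(Set.range ⇑f ∪ Set.range ⇑g)
  fintypeC := Fintype.ofFinite _
  u := ⟨fun x => ⟨f x, Or.inl ⟨x, rfl⟩⟩, fun a b h => f.injective (congrArg Subtype.val h)⟩
  v := ⟨fun y => ⟨g y, Or.inr ⟨y, rfl⟩⟩, fun a b h => g.injective (congrArg Subtype.val h)⟩
  covers := by
    rintro ⟨c, hc | hc⟩
    · exact Or.inl ⟨hc.choose, Subtype.ext hc.choose_spec⟩
    · exact Or.inr ⟨hc.choose, Subtype.ext hc.choose_spec⟩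

noncomputable def recOfVal (f : U ↪ Fin n) (g : W ↪ Fin n) : (recOf f g).C ↪ Fin n :=
  ⟨fun c => c.1, fun a b hab => Subtype.ext hab⟩

lemma recOfVal_apply (f : U ↪ Fin n) (g : W ↪ Fin n) (c : (recOf f g).C) :
    recOfVal f g c = c.1 := rfl

lemma card_ell (E : Recollement U W) (f : U ↪ Fin n) (g : W ↪ Fin n) :
    Nat.card {ℓ : E.C ↪ Fin n // (∀ x, ℓ (E.u x) = f x) ∧ (∀ y, ℓ (E.v y) = g y)} =
      if (recOf f g).Equivalent E then 1 else 0 := by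
  split_ifs with h
  · obtain ⟨e, he1, he2⟩ := h
    rw [Nat.card_eq_fintype_card, Fintype.card_eq_one_iff]
    set ι := recOfVal f g with hιdef
    have hι : ∀ c : (recOf f g).C, ι c = c.1 := recOfVal_apply f g
    refine ⟨⟨(e.symm.toEmbedding).trans ι, fun x => ?_, fun y => ?_⟩, ?_⟩
    · show ι (e.symm (E.u x)) = f x
      rw [← he1 x, Equiv.symm_apply_apply, hι]; rfl
    · show ι (e.symm (E.v y)) = g y
      rw [← he2 y, Equiv.symm_apply_apply, hι]; rfl
    · rintro ⟨ℓ, h1, h2⟩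
      refine Subtype.ext (DFunLike.ext _ _ fun c => ?_)
      show ℓ c = ι (e.symm c)
      rcases E.covers c with ⟨x, hx⟩ | ⟨y, hy⟩
      · rw [← hx, h1 x, ← he1 x, Equiv.symm_apply_apply, hι]; rfl
      · rw [← hy, h2 y, ← he2 y, Equiv.symm_apply_apply, hι]; rfl
  · rw [Nat.card_eq_fintype_card, Fintype.card_eq_zero_iff]
    constructor
    rintro ⟨ℓ, h1, h2⟩
    apply h
    have hbij : Function.Bijective (fun c : E.C =>
        (⟨ℓ c, by
          rcases E.covers c with ⟨x, hx⟩ | ⟨y, hy⟩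
          · exact Or.inl ⟨x, by rw [← hx, h1]⟩
          · exact Or.inr ⟨y, by rw [← hy, h2]⟩⟩ : ↥(Set.range ⇑f ∪ Set.range ⇑g))) := by
      constructor
      · intro a b hab
        exact ℓ.injective (congrArg Subtype.val hab)
      · rintro ⟨t, ht | ht⟩
        · refine ⟨E.u ht.choose, Subtype.ext ?_⟩
          show ℓ (E.u ht.choose) = t
          rw [h1]; exact ht.choose_spec
        · refine ⟨E.v ht.choose, Subtype.ext ?_⟩
          show ℓ (E.v ht.choose) = t
          rw [h2]; exact ht.choose_spec
    refine ⟨(Equiv.ofBijective _ hbij).symm, fun x => ?_, fun y => ?_⟩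
    · refine (Equiv.symm_apply_eq _).mpr ?_
      exact Subtype.ext (h1 x).symm
    · refine (Equiv.symm_apply_eq _).mpr ?_
      exact Subtype.ext (h2 y).symm

end RecOf

/-- Let `U, V, W` be finite sets and `R` a (finite) set of
representatives of the equivalence classes of recollements of `(U, W)`.  For any
recollement `C` of `(U, V)` and any recollement `D` of `(V, W)` there are integer
polynomials `P^E_{C,D}`, indexed by `E ∈ R`, such that for every `n ∈ ℕ` the composite
`(D) ∘ (C) : ℂ[Inj(U, Fin n)] → ℂ[Inj(W, Fin n)]` equals
`∑_{E ∈ R} P^E_{C,D}(n) · (E)`. -/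
theorem stmt7 (U V W : Type) [Fintype U] [Fintype V] [Fintype W]
    (R : Set (Recollement U W)) (hRfin : R.Finite)
    (hR : ∀ P : Recollement U W, ∃! r : R, P.Equivalent r.1)
    (C : Recollement U V) (D : Recollement V W) :
    ∃ P : Recollement U W → Polynomial ℤ,
      ∀ n : ℕ,
        (recMap V W n D).comp (recMap U V n C) =
          ∑ E ∈ hRfin.toFinset, (((P E).eval (n : ℤ) : ℤ) : ℂ) • recMap U W n E := by
  classical
  refine ⟨fun E => Ppoly C D E, fun n => ?_⟩
  apply Finsupp.lhom_ext
  intro f b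
  have hb : (Finsupp.single f b) = b • Finsupp.single f (1:ℂ) := by
    rw [Finsupp.smul_single', mul_one]
  rw [hb, map_smul, map_smul]
  congr 1
  refine Finsupp.ext fun g => ?_
  rw [comp_single_apply]
  have hrhs : ∀ E : Recollement U W,
      ((((Ppoly C D E).eval (n:ℤ) : ℤ) : ℂ) • recMap U W n E) (Finsupp.single f 1) g
        = (((Ppoly C D E).eval (n:ℤ) : ℤ) : ℂ) *
            (if (recOf f g).Equivalent E then 1 else 0) := by
    intro E
    rw [LinearMap.smul_apply, Finsupp.smul_apply, recMap_single_apply, smul_eq_mul,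
      card_ell E f g]
    push_cast
    ring
  rw [LinearMap.coe_sum, Finset.sum_apply, Finsupp.finset_sum_apply,
    Finset.sum_congr rfl (fun E _ => hrhs E)]
  obtain ⟨E₀, hE₀, huniq⟩ := hR (recOf f g)
  rw [Finset.sum_eq_single_of_mem E₀.1 (hRfin.mem_toFinset.mpr E₀.2)
    (fun E hE hne => by
      rw [if_neg, mul_zero]
      intro hcon
      exact hne (congrArg Subtype.val (huniq ⟨E, hRfin.mem_toFinset.mp hE⟩ hcon))),
    if_pos hE₀, mul_one]
  obtain ⟨e, he1, he2⟩ := hE₀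
  have hcard : Fintype.card (E₀.1).C = Nat.card ↥(Set.range ⇑f ∪ Set.range ⇑g) := by
    rw [← Nat.card_eq_fintype_card]
    exact (Nat.card_congr e).symm
  have hiff : ∀ x y, (E₀.1).u x = (E₀.1).v y ↔ f x = g y := by
    intro x y
    constructor
    · intro h
      have h2 : (recOf f g).u x = (recOf f g).v y := e.injective (by rw [he1, he2]; exact h)
      exact congrArg Subtype.val h2
    · intro h
      rw [← he1, ← he2]
      exact congrArg e (Subtype.ext h)
  have hle : Fintype.card (E₀.1).C ≤ n := by
    rw [hcard, Nat.card_eq_fintype_card]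
    simpa using Fintype.card_le_of_embedding
      (⟨Subtype.val, Subtype.val_injective⟩ : ↥(Set.range ⇑f ∪ Set.range ⇑g) ↪ Fin n)
  rw [count_pairs C D f g, Ppoly_eval C D E₀.1 hle, ← hcard]
  rw [Finset.filter_congr (fun r _ => and_congr_right' (show Compat C D r f g ↔
      compatibleE C D E₀.1 r from
      ⟨fun hc x y => (hc x y).trans (hiff x y).symm,
       fun hc x y => (hc x y).trans (hiff x y)⟩))]
  push_cast
  rfl
end

section
/- Let I, J, V be finite sets. Let Sym(I), Sym(J), Sym(I ⊔ J) denote the symmetric groups on I, J, and the disjoint union I ⊔ J, with Sym(I) × Sym(J) regarded as a subgroup of Sym(I ⊔ J) in the natural way. Consider ℂ[Inj(V, I)] as a representation of Sym(I) (by postcomposition), ℂ[Inj(J, J)] as a representation of Sym(J) (by postcomposition), and their outer tensor product ℂ[Inj(V, I)] ⊗_ℂ ℂ[Inj(J, J)] as a representation of Sym(I) × Sym(J). Then the induced representation ℂ[Sym(I ⊔ J)] ⊗_{ℂ[Sym(I) × Sym(J)]} ( ℂ[Inj(V, I)] ⊗_ℂ ℂ[Inj(J, J)] ) is isomorphic,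 as a representation of Sym(I ⊔ J), to the permutation representation ℂ[Inj(V ⊔ J, I ⊔ J)]. -/
open scoped TensorProduct

/-- The symmetric group of `β` acts on embeddings `α ↪ β` by postcomposition. -/
instance permEmbeddingMulAction (α β : Type*) :
    MulAction (Equiv.Perm β) (α ↪ β) where
  smul σ f := f.trans σ.toEmbedding
  one_smul f := by ext x; rfl
  mul_smul σ τ f := by ext x; rfl

/-- The permutation representation on `H →₀ k` induced by an action of `G` on `H`
(the meaning of `Representation.ofMulAction` in the older Mathlib). -/
noncomputable def ofMulActionFinsupp (k : Type*) [Semiring k] (G : Type*) [Monoid G]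
    (H : Type*) [MulAction G H] : Representation k G (H →₀ k) where
  toFun g := Finsupp.lmapDomain k k (g • ·)
  map_one' := by ext; simp
  map_mul' x y := by ext; simp [mul_smul]

section Induction

variable {k : Type*} [CommRing k] {H G : Type*} [Group H] [Group G]
  {M : Type*} [AddCommGroup M] [Module k M]

/-- The submodule of relations in `k[G] ⊗ M = (G →₀ M)` defining the induced module
`k[G] ⊗_{k[H]} M` along a group homomorphism `ι : H →* G`, for a representation `τ` of
`H` on `M`:  it is spanned by the elements `e_{g ι(h)} ⊗ m − e_g ⊗ τ(h)m`. -/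
noncomputable def indRel (ι : H →* G) (τ : Representation k H M) :
    Submodule k (G →₀ M) :=
  Submodule.span k
    {x | ∃ (g : G) (h : H) (m : M),
      x = Finsupp.single (g * ι h) m - Finsupp.single g (τ h m)}

/-- The underlying module of the induced representation `k[G] ⊗_{k[H]} M`, realized as
the quotient of `k[G] ⊗_k M = (G →₀ M)` by the relations `g ι(h) ⊗ m = g ⊗ τ(h)m`. -/
noncomputable abbrev IndModule (ι : H →* G) (τ : Representation k H M) : Type _ :=
  (G →₀ M) ⧸ indRel ι τ

/-- The induced representation `k[G] ⊗_{k[H]} M` of `G`, with `G` acting by left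
translation on the first factor. -/
noncomputable def indRep (ι : H →* G) (τ : Representation k H M) :
    Representation k G (IndModule ι τ) where
  toFun s :=
    Submodule.mapQ (indRel ι τ) (indRel ι τ)
      (Finsupp.lmapDomain M k (fun g : G => s * g))
      (by
        rw [indRel, Submodule.span_le]
        rintro x ⟨g, h, m, rfl⟩
        simp only [SetLike.mem_coe, Submodule.mem_comap, map_sub,
          Finsupp.lmapDomain_apply, Finsupp.mapDomain_single]
        rw [← mul_assoc]
        exact Submodule.subset_span ⟨s * g, h, m, rfl⟩)
  map_one' := by
    refine Submodule.linearMap_qext _ (Finsupp.lhom_ext fun g m => ?_)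
    simp [Submodule.mapQ_apply, Finsupp.lmapDomain_apply, Finsupp.mapDomain_single]
  map_mul' s t := by
    refine Submodule.linearMap_qext _ (Finsupp.lhom_ext fun g m => ?_)
    simp only [LinearMap.comp_apply, Submodule.mkQ_apply, Module.End.mul_apply,
      Submodule.mapQ_apply, Finsupp.lmapDomain_apply, Finsupp.mapDomain_single,
      mul_assoc]

end Induction

/-- The outer tensor product `ℂ[Inj(V, I)] ⊗ ℂ[Inj(J, J)]` of the permutation
representations of `Sym(I)` (on injections `V ↪ I`) and of `Sym(J)` (on injections
`J ↪ J`), as a representation of `Sym(I) × Sym(J)`. -/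
noncomputable def outerPermRep (I J V : Type) :
    Representation ℂ (Equiv.Perm I × Equiv.Perm J)
      (((V ↪ I) →₀ ℂ) ⊗[ℂ] ((J ↪ J) →₀ ℂ)) :=
  Representation.tprod
    ((ofMulActionFinsupp ℂ (Equiv.Perm I) (V ↪ I)).comp
      (MonoidHom.fst (Equiv.Perm I) (Equiv.Perm J)))
    ((ofMulActionFinsupp ℂ (Equiv.Perm J) (J ↪ J)).comp
      (MonoidHom.snd (Equiv.Perm I) (Equiv.Perm J)))

/-- The induced representation
`ℂ[Sym(I ⊔ J)] ⊗_{ℂ[Sym(I) × Sym(J)]} (ℂ[Inj(V, I)] ⊗ ℂ[Inj(J, J)])`: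
underlying module. -/
noncomputable def IndOuter (I J V : Type) : Type :=
  @IndModule ℂ _ (Equiv.Perm I × Equiv.Perm J) (Equiv.Perm (I ⊕ J)) _ _
    (((V ↪ I) →₀ ℂ) ⊗[ℂ] ((J ↪ J) →₀ ℂ)) TensorProduct.addCommGroup
    TensorProduct.leftModule (Equiv.Perm.sumCongrHom I J) (outerPermRep I J V)

noncomputable instance (I J V : Type) : AddCommGroup (IndOuter I J V) :=
  inferInstanceAs (AddCommGroup (@IndModule ℂ _ (Equiv.Perm I × Equiv.Perm J)
    (Equiv.Perm (I ⊕ J)) _ _ (((V ↪ I) →₀ ℂ) ⊗[ℂ] ((J ↪ J) →₀ ℂ))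
    TensorProduct.addCommGroup TensorProduct.leftModule (Equiv.Perm.sumCongrHom I J)
    (outerPermRep I J V)))

noncomputable instance (I J V : Type) : Module ℂ (IndOuter I J V) :=
  inferInstanceAs (Module ℂ (@IndModule ℂ _ (Equiv.Perm I × Equiv.Perm J)
    (Equiv.Perm (I ⊕ J)) _ _ (((V ↪ I) →₀ ℂ) ⊗[ℂ] ((J ↪ J) →₀ ℂ))
    TensorProduct.addCommGroup TensorProduct.leftModule (Equiv.Perm.sumCongrHom I J)
    (outerPermRep I J V)))

/-- The induced representation
`ℂ[Sym(I ⊔ J)] ⊗_{ℂ[Sym(I) × Sym(J)]} (ℂ[Inj(V, I)] ⊗ ℂ[Inj(J, J)])`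
of `Sym(I ⊔ J)`. -/
noncomputable def indOuterRep (I J V : Type) :
    Representation ℂ (Equiv.Perm (I ⊕ J)) (IndOuter I J V) :=
  @indRep ℂ _ (Equiv.Perm I × Equiv.Perm J) (Equiv.Perm (I ⊕ J)) _ _
    (((V ↪ I) →₀ ℂ) ⊗[ℂ] ((J ↪ J) →₀ ℂ)) TensorProduct.addCommGroup
    TensorProduct.leftModule (Equiv.Perm.sumCongrHom I J) (outerPermRep I J V)

section Stmt8Aux

noncomputable instance instZeroTensorFinsupp (I J V : Type) :
    Zero (((V ↪ I) →₀ ℂ) ⊗[ℂ] ((J ↪ J) →₀ ℂ)) :=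
  (@AddCommGroup.toAddCommMonoid _
    (TensorProduct.addCommGroup (R := ℂ) (M := (V ↪ I) →₀ ℂ)
      (N := (J ↪ J) →₀ ℂ))).toZero

variable {I J V : Type}

theorem ofMulActionFinsupp_single' {G X : Type} [Monoid G] [MulAction G X] (g : G) (x : X)
    (a : ℂ) : ofMulActionFinsupp ℂ G X g (Finsupp.single x a) = Finsupp.single (g • x) a := by
  simp [ofMulActionFinsupp]

/-- Combine a permutation of `I ⊕ J`, an injection `V ↪ I` and an injection `J ↪ J`
into an injection `V ⊕ J ↪ I ⊕ J`. -/
def embComb (g : Equiv.Perm (I ⊕ J)) (f : V ↪ I) (h : J ↪ J) : V ⊕ J ↪ I ⊕ J :=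
  (f.sumMap h).trans g.toEmbedding

@[simp] theorem embComb_apply (g : Equiv.Perm (I ⊕ J)) (f : V ↪ I) (h : J ↪ J)
    (x : V ⊕ J) : embComb g f h x = g (Sum.map f h x) := rfl

/-- The symmetric group acts transitively on embeddings of a fixed finite type into a
finite type. -/
theorem exists_perm_comp {α β : Type} [Fintype α] [Fintype β] (a b : α ↪ β) :
    ∃ p : Equiv.Perm β, ∀ x, p (a x) = b x := by
  classical
  have hcard : Fintype.card ((Set.range a)ᶜ : Set β) =
      Fintype.card ((Set.range b)ᶜ : Set β) := by
    rw [Fintype.card_compl_set, Fintype.card_compl_set,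
      Fintype.card_congr (Equiv.ofInjective a a.injective).symm,
      Fintype.card_congr (Equiv.ofInjective b b.injective).symm]
  let c : ((Set.range a)ᶜ : Set β) ≃ ((Set.range b)ᶜ : Set β) :=
    Fintype.equivOfCardEq hcard
  refine ⟨(Equiv.Set.sumCompl (Set.range a)).symm.trans
    ((Equiv.sumCongr ((Equiv.ofInjective a a.injective).symm.trans
      (Equiv.ofInjective b b.injective)) c).trans
      (Equiv.Set.sumCompl (Set.range b))), fun x => ?_⟩
  simp only [Equiv.trans_apply]
  rw [Equiv.Set.sumCompl_symm_apply_of_mem (Set.mem_range_self x)]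
  simp [Equiv.ofInjective_symm_apply]

theorem exists_decomp [Fintype I] [Fintype J] [Fintype V] (u : V ⊕ J ↪ I ⊕ J) :
    ∃ t : Equiv.Perm (I ⊕ J) × (V ↪ I) × (J ↪ J), embComb t.1 t.2.1 t.2.2 = u := by
  have hVI : Fintype.card V ≤ Fintype.card I := by
    have := Fintype.card_le_of_embedding u
    simp only [Fintype.card_sum] at this
    omega
  obtain ⟨f0⟩ := Function.Embedding.nonempty_of_card_le hVI
  obtain ⟨p, hp⟩ := exists_perm_comp (f0.sumMap (Function.Embedding.refl J)) u
  exact ⟨⟨p, f0, Function.Embedding.refl J⟩, Function.Embedding.ext fun x => hp x⟩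

theorem exists_sumCongr [Finite I] [Finite J] (p : Equiv.Perm (I ⊕ J))
    (f f' : V ↪ I) (h h' : J ↪ J)
    (hp : ∀ x, p (Sum.map f h x) = Sum.map f' h' x) :
    ∃ st : Equiv.Perm I × Equiv.Perm J,
      p = Equiv.Perm.sumCongrHom I J st ∧ (∀ v, st.1 (f v) = f' v) ∧
        (∀ j, st.2 (h j) = h' j) := by
  have hsurj : Function.Surjective h := Finite.injective_iff_surjective.mp h.injective
  have hsurj' : Function.Surjective h' := Finite.injective_iff_surjective.mp h'.injective
  have hmapsTo : Set.MapsTo p (Set.range (Sum.inl : I → I ⊕ J))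
      (Set.range (Sum.inl : I → I ⊕ J)) := by
    rintro _ ⟨i, rfl⟩
    rcases hq : p (Sum.inl i) with i' | j
    · exact ⟨i', rfl⟩
    · exfalso
      obtain ⟨j0, hj0⟩ := hsurj' j
      have h1 : p (Sum.inr (h j0)) = Sum.inr j := by
        have := hp (Sum.inr j0); simpa [hj0] using this
      have h2 : Sum.inl i = Sum.inr (h j0) := p.injective (by rw [hq, h1])
      simp at h2
  have hmem := Equiv.Perm.mem_sumCongrHom_range_of_perm_mapsTo_inl hmapsTo
  rw [MonoidHom.mem_range] at hmem
  obtain ⟨st, hst⟩ := hmem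
  refine ⟨st, hst.symm, fun v => ?_, fun j => ?_⟩
  · have := hp (Sum.inl v)
    rw [← hst] at this
    simpa [Equiv.Perm.sumCongrHom] using this
  · have := hp (Sum.inr j)
    rw [← hst] at this
    simpa [Equiv.Perm.sumCongrHom] using this

/-- The forward map on one group element: `e_f ⊗ e_h ↦ e_{g ∘ (f ⊕ h)}`. -/
noncomputable def fwdAux (I J V : Type) (g : Equiv.Perm (I ⊕ J)) :
    (((V ↪ I) →₀ ℂ) ⊗[ℂ] ((J ↪ J) →₀ ℂ)) →ₗ[ℂ] ((V ⊕ J ↪ I ⊕ J) →₀ ℂ) :=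
  TensorProduct.lift <| Finsupp.lsum ℂ fun f =>
    (Finsupp.lsum ℂ fun h =>
      (LinearMap.mul ℂ ℂ).compr₂
        (LinearMap.toSpanSingleton ℂ ((V ⊕ J ↪ I ⊕ J) →₀ ℂ)
          (Finsupp.single (embComb g f h) 1))).flip

theorem fwdAux_single (g : Equiv.Perm (I ⊕ J)) (f : V ↪ I) (h : J ↪ J) (a b : ℂ) :
    fwdAux I J V g (Finsupp.single f a ⊗ₜ[ℂ] Finsupp.single h b) =
      Finsupp.single (embComb g f h) (a * b) := by
  simp [fwdAux, LinearMap.toSpanSingleton, Finsupp.smul_single, mul_comm]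

/-- The forward map `ℂ[Sym(I⊔J)] ⊗ M → ℂ[Inj(V⊔J, I⊔J)]`. -/
noncomputable def fwd (I J V : Type) :
    (Equiv.Perm (I ⊕ J) →₀ (((V ↪ I) →₀ ℂ) ⊗[ℂ] ((J ↪ J) →₀ ℂ))) →ₗ[ℂ]
      ((V ⊕ J ↪ I ⊕ J) →₀ ℂ) :=
  Finsupp.lsum ℂ (fwdAux I J V)

theorem embComb_mul (g : Equiv.Perm (I ⊕ J)) (st : Equiv.Perm I × Equiv.Perm J)
    (f : V ↪ I) (h : J ↪ J) :
    embComb (g * Equiv.Perm.sumCongrHom I J st) f h =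
      embComb g (st.1 • f) (st.2 • h) := by
  refine Function.Embedding.ext fun x => ?_
  cases x <;> rfl

theorem outerPermRep_single (st : Equiv.Perm I × Equiv.Perm J) (f : V ↪ I) (h : J ↪ J)
    (a b : ℂ) :
    outerPermRep I J V st (Finsupp.single f a ⊗ₜ[ℂ] Finsupp.single h b) =
      Finsupp.single (st.1 • f) a ⊗ₜ[ℂ] Finsupp.single (st.2 • h) b := by
  simp [outerPermRep, Representation.tprod_apply, ofMulActionFinsupp_single']
  rfl

theorem fwdAux_mul (g : Equiv.Perm (I ⊕ J)) (st : Equiv.Perm I × Equiv.Perm J) :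
    fwdAux I J V (g * Equiv.Perm.sumCongrHom I J st) =
      (fwdAux I J V g).comp (outerPermRep I J V st) := by
  refine TensorProduct.ext (Finsupp.lhom_ext fun f a => Finsupp.lhom_ext fun h b => ?_)
  show fwdAux I J V _ (Finsupp.single f a ⊗ₜ[ℂ] Finsupp.single h b) =
    fwdAux I J V g (outerPermRep I J V st (Finsupp.single f a ⊗ₜ[ℂ] Finsupp.single h b))
  rw [fwdAux_single, outerPermRep_single, fwdAux_single, embComb_mul]

/-- The relation submodule for the induction, specialized. -/
noncomputable def relIO (I J V : Type) :
    Submodule ℂ (Equiv.Perm (I ⊕ J) →₀ (((V ↪ I) →₀ ℂ) ⊗[ℂ] ((J ↪ J) →₀ ℂ))) :=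
  @indRel ℂ _ (Equiv.Perm I × Equiv.Perm J) (Equiv.Perm (I ⊕ J)) _ _
    (((V ↪ I) →₀ ℂ) ⊗[ℂ] ((J ↪ J) →₀ ℂ)) TensorProduct.addCommGroup
    TensorProduct.leftModule (Equiv.Perm.sumCongrHom I J) (outerPermRep I J V)

/-- The quotient map onto the induced module. -/
noncomputable def mkIO (I J V : Type) :
    (Equiv.Perm (I ⊕ J) →₀ (((V ↪ I) →₀ ℂ) ⊗[ℂ] ((J ↪ J) →₀ ℂ))) →ₗ[ℂ]
      IndOuter I J V :=
  (relIO I J V).mkQ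

theorem fwd_single (g : Equiv.Perm (I ⊕ J))
    (m : ((V ↪ I) →₀ ℂ) ⊗[ℂ] ((J ↪ J) →₀ ℂ)) :
    fwd I J V (Finsupp.single g m) = fwdAux I J V g m := by
  simp [fwd]

theorem relIO_le_ker : relIO I J V ≤ LinearMap.ker (fwd I J V) := by
  rw [relIO, indRel, Submodule.span_le]
  rintro x ⟨g, st, m, rfl⟩
  simp only [SetLike.mem_coe, LinearMap.mem_ker, map_sub, fwd_single, sub_eq_zero]
  rw [fwdAux_mul g st]
  rfl

/-- The forward map descends to the induced module. -/
noncomputable def fwdQ (I J V : Type) :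
    IndOuter I J V →ₗ[ℂ] ((V ⊕ J ↪ I ⊕ J) →₀ ℂ) :=
  Submodule.liftQ (relIO I J V) (fwd I J V) relIO_le_ker

theorem fwdQ_mkIO (x) : fwdQ I J V (mkIO I J V x) = fwd I J V x := rfl

theorem mkIO_eq [Fintype I] [Fintype J] (g g' : Equiv.Perm (I ⊕ J))
    (f f' : V ↪ I) (h h' : J ↪ J) (he : embComb g f h = embComb g' f' h') :
    mkIO I J V (Finsupp.single g (Finsupp.single f (1 : ℂ) ⊗ₜ[ℂ] Finsupp.single h 1)) =
      mkIO I J V (Finsupp.single g'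
        (Finsupp.single f' (1 : ℂ) ⊗ₜ[ℂ] Finsupp.single h' 1)) := by
  have hp : ∀ x, (g'⁻¹ * g) (Sum.map f h x) = Sum.map f' h' x := by
    intro x
    have hx := DFunLike.congr_fun he x
    simp only [embComb_apply] at hx
    simp [Equiv.Perm.mul_apply, hx]
  obtain ⟨st, hpeq, hσ, hτ⟩ := exists_sumCongr _ f f' h h' hp
  have hg : g = g' * Equiv.Perm.sumCongrHom I J st := by
    rw [← hpeq, mul_inv_cancel_left]
  have hσ' : st.1 • f = f' := Function.Embedding.ext hσ
  have hτ' : st.2 • h = h' := Function.Embedding.ext hτ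
  have hact : outerPermRep I J V st
      (Finsupp.single f (1 : ℂ) ⊗ₜ[ℂ] Finsupp.single h 1) =
        Finsupp.single f' (1 : ℂ) ⊗ₜ[ℂ] Finsupp.single h' 1 := by
    rw [outerPermRep_single, hσ', hτ']
  refine (Submodule.Quotient.eq _).mpr ?_
  rw [hg, ← hact]
  exact Submodule.subset_span
    ⟨g', st, Finsupp.single f (1 : ℂ) ⊗ₜ[ℂ] Finsupp.single h 1, rfl⟩

/-- A section of the decomposition. -/
noncomputable def sec [Fintype I] [Fintype J] [Fintype V] (u : V ⊕ J ↪ I ⊕ J) :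
    Equiv.Perm (I ⊕ J) × (V ↪ I) × (J ↪ J) :=
  Classical.choose (exists_decomp u)

theorem sec_spec [Fintype I] [Fintype J] [Fintype V] (u : V ⊕ J ↪ I ⊕ J) :
    embComb (sec u).1 (sec u).2.1 (sec u).2.2 = u :=
  Classical.choose_spec (exists_decomp u)

/-- The backward map. -/
noncomputable def bwd (I J V : Type) [Fintype I] [Fintype J] [Fintype V] :
    ((V ⊕ J ↪ I ⊕ J) →₀ ℂ) →ₗ[ℂ] IndOuter I J V :=
  Finsupp.lsum ℂ fun u => LinearMap.toSpanSingleton ℂ (IndOuter I J V)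
    (mkIO I J V (Finsupp.single (sec u).1
      (Finsupp.single (sec u).2.1 (1 : ℂ) ⊗ₜ[ℂ] Finsupp.single (sec u).2.2 1)))

theorem fwdQ_comp_bwd (I J V : Type) [Fintype I] [Fintype J] [Fintype V] :
    (fwdQ I J V).comp (bwd I J V) = LinearMap.id := by
  refine Finsupp.lhom_ext fun u a => ?_
  simp only [LinearMap.comp_apply, LinearMap.id_apply, bwd, Finsupp.lsum_single,
    LinearMap.toSpanSingleton_apply, map_smul, fwdQ_mkIO, fwd_single, fwdAux_single,
    mul_one, sec_spec, Finsupp.smul_single, smul_eq_mul]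

theorem bwd_comp_fwdQ (I J V : Type) [Fintype I] [Fintype J] [Fintype V] :
    (bwd I J V).comp (fwdQ I J V) = LinearMap.id := by
  refine Submodule.linearMap_qext _ ?_
  refine Finsupp.lhom_ext' fun g => ?_
  refine LinearMap.ext fun m => ?_
  show bwd I J V (fwdQ I J V (mkIO I J V (Finsupp.single g m))) = mkIO I J V (Finsupp.single g m)
  induction m using TensorProduct.induction_on with
  | zero => simp
  | add x y hx hy =>
    rw [Finsupp.single_add, map_add, map_add, map_add, hx, hy]
  | tmul x y =>
    induction x using Finsupp.induction_linear with
    | zero => simp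
    | add _ _ h1 h2 =>
      rw [TensorProduct.add_tmul, Finsupp.single_add, map_add, map_add, map_add, h1, h2]
    | single f a =>
      induction y using Finsupp.induction_linear with
      | zero => simp
      | add _ _ h1 h2 =>
        rw [TensorProduct.tmul_add, Finsupp.single_add, map_add, map_add, map_add,
          h1, h2]
      | single h b =>
        have key : (Finsupp.single f a ⊗ₜ[ℂ] Finsupp.single h b :
            ((V ↪ I) →₀ ℂ) ⊗[ℂ] ((J ↪ J) →₀ ℂ)) =
            (a * b) • (Finsupp.single f (1 : ℂ) ⊗ₜ[ℂ] Finsupp.single h (1 : ℂ)) := by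
          rw [← TensorProduct.smul_tmul_smul, Finsupp.smul_single, Finsupp.smul_single,
            smul_eq_mul, mul_one, smul_eq_mul, mul_one]
        rw [key, ← Finsupp.smul_single, map_smul, map_smul, map_smul]
        congr 1
        show bwd I J V (fwdQ I J V (mkIO I J V _)) = mkIO I J V _
        rw [fwdQ_mkIO, fwd_single, fwdAux_single, mul_one]
        have hb : bwd I J V (Finsupp.single (embComb g f h) (1 : ℂ)) =
            mkIO I J V (Finsupp.single (sec (embComb g f h)).1
              (Finsupp.single (sec (embComb g f h)).2.1 (1 : ℂ) ⊗ₜ[ℂ]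
                Finsupp.single (sec (embComb g f h)).2.2 1)) := by
          simp [bwd]
        rw [hb]
        exact mkIO_eq _ _ _ _ _ _ (by rw [sec_spec])

theorem embComb_smul (σ g : Equiv.Perm (I ⊕ J)) (f : V ↪ I) (h : J ↪ J) :
    σ • embComb g f h = embComb (σ * g) f h :=
  Function.Embedding.ext fun _ => rfl

theorem fwdAux_perm (σ g : Equiv.Perm (I ⊕ J)) :
    fwdAux I J V (σ * g) =
      (ofMulActionFinsupp ℂ (Equiv.Perm (I ⊕ J)) (V ⊕ J ↪ I ⊕ J) σ).comp
        (fwdAux I J V g) := by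
  refine TensorProduct.ext (Finsupp.lhom_ext fun f a => Finsupp.lhom_ext fun h b => ?_)
  show fwdAux I J V _ (Finsupp.single f a ⊗ₜ[ℂ] Finsupp.single h b) =
    ofMulActionFinsupp ℂ (Equiv.Perm (I ⊕ J)) (V ⊕ J ↪ I ⊕ J) σ
      (fwdAux I J V g (Finsupp.single f a ⊗ₜ[ℂ] Finsupp.single h b))
  rw [fwdAux_single, fwdAux_single, ofMulActionFinsupp_single']
  rfl

theorem indOuterRep_mkIO (σ : Equiv.Perm (I ⊕ J))
    (x : Equiv.Perm (I ⊕ J) →₀ (((V ↪ I) →₀ ℂ) ⊗[ℂ] ((J ↪ J) →₀ ℂ))) :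
    indOuterRep I J V σ (mkIO I J V x) =
      mkIO I J V (Finsupp.lmapDomain _ ℂ (fun g => σ * g) x) := rfl

theorem fwdQ_equivariant (I J V : Type) (σ : Equiv.Perm (I ⊕ J)) :
    (fwdQ I J V).comp (indOuterRep I J V σ) =
      (ofMulActionFinsupp ℂ (Equiv.Perm (I ⊕ J)) (V ⊕ J ↪ I ⊕ J) σ).comp
        (fwdQ I J V) := by
  refine Submodule.linearMap_qext _ (Finsupp.lhom_ext' fun g => LinearMap.ext fun m => ?_)
  show fwdQ I J V (indOuterRep I J V σ (mkIO I J V (Finsupp.single g m))) =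
    ofMulActionFinsupp ℂ (Equiv.Perm (I ⊕ J)) (V ⊕ J ↪ I ⊕ J) σ
      (fwdQ I J V (mkIO I J V (Finsupp.single g m)))
  rw [indOuterRep_mkIO, Finsupp.lmapDomain_apply, Finsupp.mapDomain_single,
    fwdQ_mkIO, fwdQ_mkIO, fwd_single, fwd_single, fwdAux_perm]
  rfl

end Stmt8Aux

/-- Let `I, J, V` be finite sets.  The representation of
`Sym(I ⊔ J)` induced, along the natural inclusion `Sym(I) × Sym(J) → Sym(I ⊔ J)`,
from the outer tensor product `ℂ[Inj(V, I)] ⊗ ℂ[Inj(J, J)]` of the permutation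
representations of `Sym(I)` and `Sym(J)`, is isomorphic as a representation of
`Sym(I ⊔ J)` to the permutation representation `ℂ[Inj(V ⊔ J, I ⊔ J)]`. -/
theorem stmt8 (I J V : Type) [Fintype I] [Fintype J] [Fintype V] :
    ∃ e : IndOuter I J V ≃ₗ[ℂ] ((V ⊕ J ↪ I ⊕ J) →₀ ℂ),
      ∀ (σ : Equiv.Perm (I ⊕ J)) (x : IndOuter I J V),
        e (indOuterRep I J V σ x) =
          ofMulActionFinsupp ℂ (Equiv.Perm (I ⊕ J)) (V ⊕ J ↪ I ⊕ J) σ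
            (e x) := by
  refine ⟨LinearEquiv.ofLinear (fwdQ I J V) (bwd I J V) (fwdQ_comp_bwd I J V)
    (bwd_comp_fwdQ I J V), fun σ x => ?_⟩
  simpa using LinearMap.congr_fun (fwdQ_equivariant I J V σ) x
end

section
/- Let n ∈ ℕ, let ℂ[S_n] be the group algebra over ℂ of the symmetric group S_n on {1, …, n}, and fix a ∈ ℂ. For 1 ≤ i ≤ n define x_i = a·1 + Σ_{j < i} (j i) ∈ ℂ[S_n], where (j i) denotes the transposition swapping j and i, and for 1 ≤ i < n let s_i = (i, i+1). Then: (a) x_i x_j = x_j x_i for all 1 ≤ i, j ≤ n; (b) s_j x_i = x_i s_j whenever 1 ≤ j < n, 1 ≤ i ≤ n and j ∉ {i−1, i}; (c) s_i x_{i+1} = x_i s_i + 1 for all 1 ≤ i < n. -/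
open scoped Classical

/-- The element `x_i = a·1 + Σ_{j < i} (j i)` of the group algebra `ℂ[S_n]`
(0-indexed version of the classical generators of the degenerate affine Hecke
algebra under the evaluation homomorphism). -/
noncomputable def xElt (n : ℕ) (a : ℂ) (i : Fin n) :
    MonoidAlgebra ℂ (Equiv.Perm (Fin n)) :=
  a • (1 : MonoidAlgebra ℂ (Equiv.Perm (Fin n))) +
    ∑ j ∈ Finset.univ.filter (fun j : Fin n => j < i),
      MonoidAlgebra.single (Equiv.swap j i) (1 : ℂ)

noncomputable def Tsum (n : ℕ) (i : Fin n) : MonoidAlgebra ℂ (Equiv.Perm (Fin n)) :=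
  ∑ j ∈ Finset.univ.filter (fun j : Fin n => j < i),
      MonoidAlgebra.single (Equiv.swap j i) (1 : ℂ)

lemma xElt_eq (n : ℕ) (a : ℂ) (i : Fin n) : xElt n a i = a • 1 + Tsum n i := rfl

lemma swapA {α : Type*} [DecidableEq α] {k i j : α} (h1 : k ≠ i) (h2 : k ≠ j) (h3 : i ≠ j) :
    Equiv.swap k i * Equiv.swap i j = Equiv.swap k j * Equiv.swap k i := by
  ext x
  simp only [Equiv.Perm.mul_apply, Equiv.swap_apply_def]
  split_ifs <;> simp_all

lemma swapB {α : Type*} [DecidableEq α] {k i j : α} (h1 : k ≠ i) (h2 : k ≠ j) (h3 : i ≠ j) :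
    Equiv.swap k i * Equiv.swap k j = Equiv.swap i j * Equiv.swap k i := by
  ext x
  simp only [Equiv.Perm.mul_apply, Equiv.swap_apply_def]
  split_ifs <;> simp_all

lemma swapC {α : Type*} [DecidableEq α] {k i l j : α} (h1 : k ≠ l) (h2 : k ≠ j) (h3 : i ≠ l)
    (h4 : i ≠ j) :
    Equiv.swap k i * Equiv.swap l j = Equiv.swap l j * Equiv.swap k i := by
  ext x
  simp only [Equiv.Perm.mul_apply, Equiv.swap_apply_def]
  split_ifs <;> simp_all

lemma Tcomm_lt {n : ℕ} (i j : Fin n) (hij : i < j) : Tsum n i * Tsum n j = Tsum n j * Tsum n i := by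
  classical
  unfold Tsum
  rw [Finset.sum_mul_sum, Finset.sum_mul_sum]
  simp only [MonoidAlgebra.single_mul_single, one_mul]
  conv_rhs => rw [Finset.sum_comm]
  rw [← Finset.sum_product', ← Finset.sum_product']
  refine Finset.sum_nbij' (fun p => if p.2 = i then (p.1, p.1) else if p.2 = p.1 then (p.1, i) else p)
    (fun p => if p.2 = i then (p.1, p.1) else if p.2 = p.1 then (p.1, i) else p)
    ?_ ?_ ?_ ?_ ?_
  · rintro ⟨k, l⟩ hp
    simp only [Finset.mem_product, Finset.mem_filter, Finset.mem_univ, true_and] at hp ⊢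
    obtain ⟨hk, hl⟩ := hp
    by_cases h1 : l = i
    · simp only [if_pos h1]
      exact ⟨hk, hk.trans hij⟩
    · by_cases h2 : l = k
      · simp only [if_neg h1, if_pos h2]
        exact ⟨hk, hij⟩
      · simp only [if_neg h1, if_neg h2]
        exact ⟨hk, hl⟩
  · rintro ⟨k, l⟩ hp
    simp only [Finset.mem_product, Finset.mem_filter, Finset.mem_univ, true_and] at hp ⊢
    obtain ⟨hk, hl⟩ := hp
    by_cases h1 : l = i
    · simp only [if_pos h1]
      exact ⟨hk, hk.trans hij⟩
    · by_cases h2 : l = k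
      · simp only [if_neg h1, if_pos h2]
        exact ⟨hk, hij⟩
      · simp only [if_neg h1, if_neg h2]
        exact ⟨hk, hl⟩
  · rintro ⟨k, l⟩ hp
    simp only [Finset.mem_product, Finset.mem_filter, Finset.mem_univ, true_and] at hp
    obtain ⟨hk, hl⟩ := hp
    have hki : k ≠ i := hk.ne
    by_cases h1 : l = i
    · subst h1
      simp [hki]
    · by_cases h2 : l = k
      · subst h2
        simp [hki, h1]
      · simp [h1, h2]
  · rintro ⟨k, l⟩ hp
    simp only [Finset.mem_product, Finset.mem_filter, Finset.mem_univ, true_and] at hp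
    obtain ⟨hk, hl⟩ := hp
    have hki : k ≠ i := hk.ne
    by_cases h1 : l = i
    · subst h1
      simp [hki]
    · by_cases h2 : l = k
      · subst h2
        simp [hki, h1]
      · simp [h1, h2]
  · rintro ⟨k, l⟩ hp
    simp only [Finset.mem_product, Finset.mem_filter, Finset.mem_univ, true_and] at hp
    obtain ⟨hk, hl⟩ := hp
    have hki : k ≠ i := hk.ne
    have hkj : k ≠ j := (hk.trans hij).ne
    have hijne : i ≠ j := hij.ne
    have hlj : l ≠ j := hl.ne
    by_cases h1 : l = i
    · simp only [h1, if_pos rfl]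
      rw [swapA hki hkj hijne]
      simp
    · by_cases h2 : l = k
      · simp only [h2, if_neg hki, if_pos rfl]
        rw [swapB hki hkj hijne]
        simp
      · simp only [if_neg h1, if_neg h2]
        rw [swapC (fun h => h2 h.symm) hkj (fun h => h1 h.symm) hijne]

lemma Tcomm {n : ℕ} (i j : Fin n) : Tsum n i * Tsum n j = Tsum n j * Tsum n i := by
  rcases lt_trichotomy i j with h | h | h
  · exact Tcomm_lt i j h
  · rw [h]
  · exact (Tcomm_lt j i h).symm

/-- single s 1 * Tsum i = Tsum i * single s 1 when s fixes i and permutes {k | k < i}. -/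
lemma single_mul_Tsum {n : ℕ} (i : Fin n) (s : Equiv.Perm (Fin n)) (hs2 : s * s = 1)
    (hsi : s i = i) (hperm : ∀ k : Fin n, k < i → s k < i) :
    MonoidAlgebra.single s (1 : ℂ) * Tsum n i = Tsum n i * MonoidAlgebra.single s (1 : ℂ) := by
  classical
  unfold Tsum
  rw [Finset.mul_sum, Finset.sum_mul]
  simp only [MonoidAlgebra.single_mul_single, one_mul, mul_one]
  refine Finset.sum_nbij' (fun k => s k) (fun k => s k) ?_ ?_ ?_ ?_ ?_
  · intro k hk
    simp only [Finset.mem_filter, Finset.mem_univ, true_and] at hk ⊢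
    exact hperm k hk
  · intro k hk
    simp only [Finset.mem_filter, Finset.mem_univ, true_and] at hk ⊢
    exact hperm k hk
  · intro k _
    have := congrArg (fun f : Equiv.Perm (Fin n) => f k) hs2
    simpa using this
  · intro k _
    have := congrArg (fun f : Equiv.Perm (Fin n) => f k) hs2
    simpa using this
  · intro k _
    rw [Equiv.mul_swap_eq_swap_mul, hsi]

/-- In `ℂ[S_n]`, with `x_i = a + Σ_{j<i} (j i)` and
`s_i = (i, i+1)`:  (a) the `x_i` commute pairwise; (b) `s_j x_i = x_i s_j` when
`j ∉ {i-1, i}`; (c) `s_i x_{i+1} = x_i s_i + 1`.  (These are the defining relations of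
the degenerate affine Hecke algebra of type A, so the assignment
`s_i ↦ (i, i+1)`, `x_i ↦ a + Σ_{j<i}(j i)` is the evaluation homomorphism.) -/
theorem stmt9 (n : ℕ) (a : ℂ) :
    (∀ i j : Fin n, xElt n a i * xElt n a j = xElt n a j * xElt n a i) ∧
      (∀ (i j : Fin n) (hj : (j : ℕ) + 1 < n), (j : ℕ) ≠ (i : ℕ) →
        (j : ℕ) + 1 ≠ (i : ℕ) →
        MonoidAlgebra.single (Equiv.swap j ⟨(j : ℕ) + 1, hj⟩) (1 : ℂ) * xElt n a i =
          xElt n a i *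
            MonoidAlgebra.single (Equiv.swap j ⟨(j : ℕ) + 1, hj⟩) (1 : ℂ)) ∧
      (∀ (i : Fin n) (hi : (i : ℕ) + 1 < n),
        MonoidAlgebra.single (Equiv.swap i ⟨(i : ℕ) + 1, hi⟩) (1 : ℂ) *
            xElt n a ⟨(i : ℕ) + 1, hi⟩ =
          xElt n a i * MonoidAlgebra.single (Equiv.swap i ⟨(i : ℕ) + 1, hi⟩) (1 : ℂ)
            + 1) := by
  refine ⟨?_, ?_, ?_⟩
  · -- (a)
    intro i j
    rw [xElt_eq, xElt_eq]
    simp only [add_mul, mul_add, smul_mul_assoc, mul_smul_comm, smul_add, one_mul, mul_one]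
    rw [Tcomm i j]
    abel
  · -- (b)
    intro i j hj h1 h2
    set j1 : Fin n := ⟨(j : ℕ) + 1, hj⟩ with hj1
    set s := Equiv.swap j j1 with hs
    have hji : j ≠ i := fun h => h1 (congrArg Fin.val h)
    have hj1i : j1 ≠ i := fun h => h2 (congrArg Fin.val h)
    have hs2 : s * s = 1 := Equiv.swap_mul_self _ _
    have hsi : s i = i := Equiv.swap_apply_of_ne_of_ne hji.symm hj1i.symm
    have hperm : ∀ k : Fin n, k < i → s k < i := by
      intro k hk
      have hk' : (k : ℕ) < (i : ℕ) := hk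
      rw [hs, Fin.lt_def]
      by_cases hkj : k = j
      · rw [hkj, Equiv.swap_apply_left]
        have hkv : (k : ℕ) = (j : ℕ) := congrArg Fin.val hkj
        show (j : ℕ) + 1 < (i : ℕ)
        omega
      · by_cases hkj1 : k = j1
        · rw [hkj1, Equiv.swap_apply_right]
          have hkv : (k : ℕ) = (j : ℕ) + 1 := congrArg Fin.val hkj1
          show (j : ℕ) < (i : ℕ)
          omega
        · rw [Equiv.swap_apply_of_ne_of_ne hkj hkj1]
          exact hk'
    rw [xElt_eq]
    rw [mul_add, add_mul, mul_smul_comm, smul_mul_assoc, one_mul, mul_one,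
      single_mul_Tsum i s hs2 hsi hperm]
  · -- (c)
    intro i hi
    set i1 : Fin n := ⟨(i : ℕ) + 1, hi⟩ with hi1
    set s := Equiv.swap i i1 with hs
    have hii1 : i ≠ i1 := by
      intro h
      have := congrArg Fin.val h
      simp [hi1] at this
    have hsplit : (Finset.univ.filter (fun k : Fin n => k < i1)) =
        insert i (Finset.univ.filter (fun k : Fin n => k < i)) := by
      ext k
      simp only [Finset.mem_filter, Finset.mem_univ, true_and, Finset.mem_insert]
      constructor
      · intro h
        have h' : (k : ℕ) < (i : ℕ) + 1 := h
        rcases Nat.lt_succ_iff_lt_or_eq.mp h' with h'' | h''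
        · exact Or.inr h''
        · exact Or.inl (Fin.ext h'')
      · rintro (rfl | h)
        · show (k : ℕ) < (k : ℕ) + 1
          omega
        · show (k : ℕ) < (i : ℕ) + 1
          exact Nat.lt_succ_of_lt h
    have hnotmem : i ∉ Finset.univ.filter (fun k : Fin n => k < i) := by
      simp
    have hT1 : Tsum n i1 = MonoidAlgebra.single s (1 : ℂ) +
        ∑ k ∈ Finset.univ.filter (fun k : Fin n => k < i),
          MonoidAlgebra.single (Equiv.swap k i1) (1 : ℂ) := by
      unfold Tsum
      rw [hsplit, Finset.sum_insert hnotmem]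
    have key : MonoidAlgebra.single s (1 : ℂ) *
        (∑ k ∈ Finset.univ.filter (fun k : Fin n => k < i),
          MonoidAlgebra.single (Equiv.swap k i1) (1 : ℂ)) =
        Tsum n i * MonoidAlgebra.single s (1 : ℂ) := by
      unfold Tsum
      rw [Finset.mul_sum, Finset.sum_mul]
      refine Finset.sum_congr rfl ?_
      intro k hk
      simp only [Finset.mem_filter, Finset.mem_univ, true_and] at hk
      have hki : k ≠ i := hk.ne
      have hki1 : k ≠ i1 := by
        intro h
        have := congrArg Fin.val h
        have hk' : (k : ℕ) < (i : ℕ) := hk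
        simp [hi1] at this
        omega
      simp only [MonoidAlgebra.single_mul_single, one_mul, mul_one]
      congr 1
      rw [hs, Equiv.mul_swap_eq_swap_mul, Equiv.swap_apply_of_ne_of_ne hki hki1,
        Equiv.swap_apply_right]
    have hss : MonoidAlgebra.single s (1 : ℂ) * MonoidAlgebra.single s (1 : ℂ) = 1 := by
      rw [MonoidAlgebra.single_mul_single, one_mul, hs, Equiv.swap_mul_self]
      rfl
    rw [xElt_eq, xElt_eq, hT1]
    rw [mul_add, mul_add, mul_smul_comm, mul_one, add_mul, smul_mul_assoc, one_mul]
    rw [hss, key]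
    abel
end

section
/- Let n ∈ ℕ, let ℂ[S_n] be the group algebra over ℂ of the symmetric group S_n on {1, …, n}, and fix a ∈ ℂ. For 1 ≤ i ≤ n define y_i = a·1 + (1/2) Σ_{j ≠ i} (i j) ∈ ℂ[S_n], where (i j) denotes the transposition swapping i and j. Then: (a) σ y_i σ^{-1} = y_{σ(i)} for every σ ∈ S_n and every i; (b) for all i ≠ j, the commutator satisfies [y_i, y_j] = (1/4) Σ_{k ≠ i, j} ( (i j k) − (j i k) ), where (i j k) denotes the 3-cycle sending i ↦ j, j ↦ k, k ↦ i, and (j i k) the 3-cycle sending j ↦ i, i ↦ k, k ↦ j. -/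
open scoped Classical

section SwapLemmas
open Equiv
variable {α : Type*} [DecidableEq α]

lemma swap_comm4 {i k j l : α} (h1 : i ≠ j) (h2 : i ≠ l) (h3 : k ≠ j) (h4 : k ≠ l) :
    swap i k * swap j l = swap j l * swap i k := by
  ext x; simp only [Perm.mul_apply, swap_apply_def]; split_ifs <;> simp_all

lemma swapL1 {i j k : α} (h1 : i ≠ j) (h2 : i ≠ k) (h3 : j ≠ k) :
    swap j k * swap i j = swap i j * swap i k := by
  ext x; simp only [Perm.mul_apply, swap_apply_def]; split_ifs <;> simp_all

lemma swapL2 {i j k : α} (h1 : i ≠ j) (h2 : i ≠ k) (h3 : j ≠ k) :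
    swap i k * swap j k = swap i j * swap i k := by
  ext x; simp only [Perm.mul_apply, swap_apply_def]; split_ifs <;> simp_all

lemma swapL3 {i j k : α} (h1 : i ≠ j) (h2 : i ≠ k) (h3 : j ≠ k) :
    swap j k * swap i k = swap i j * swap j k := by
  ext x; simp only [Perm.mul_apply, swap_apply_def]; split_ifs <;> simp_all

lemma swapL4 {i j k : α} (h1 : i ≠ j) (h2 : i ≠ k) (h3 : j ≠ k) :
    swap i k * swap j i = swap i j * swap j k := by
  ext x; simp only [Perm.mul_apply, swap_apply_def]; split_ifs <;> simp_all

lemma swapL5 {i j k : α} (h1 : i ≠ j) (h2 : i ≠ k) (h3 : j ≠ k) :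
    swap j i * swap i k = swap i j * swap i k := by
  ext x; simp only [Perm.mul_apply, swap_apply_def]; split_ifs <;> simp_all

end SwapLemmas

lemma Tcomm_s10 (n : ℕ) (i j : Fin n) (hij : i ≠ j) :
    (∑ k ∈ Finset.univ.filter (fun k : Fin n => k ≠ i),
        MonoidAlgebra.single (Equiv.swap i k) (1 : ℂ)) *
      (∑ l ∈ Finset.univ.filter (fun l : Fin n => l ≠ j),
        MonoidAlgebra.single (Equiv.swap j l) (1 : ℂ)) -
    (∑ l ∈ Finset.univ.filter (fun l : Fin n => l ≠ j),
        MonoidAlgebra.single (Equiv.swap j l) (1 : ℂ)) *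
      (∑ k ∈ Finset.univ.filter (fun k : Fin n => k ≠ i),
        MonoidAlgebra.single (Equiv.swap i k) (1 : ℂ)) =
    ∑ k ∈ Finset.univ.filter (fun k : Fin n => k ≠ i ∧ k ≠ j),
      (MonoidAlgebra.single (Equiv.swap i j * Equiv.swap j k) (1 : ℂ) -
        MonoidAlgebra.single (Equiv.swap i j * Equiv.swap i k) (1 : ℂ)) := by
  classical
  set K : Finset (Fin n) := Finset.univ.filter (fun k : Fin n => k ≠ i ∧ k ≠ j) with hK
  rw [Finset.sum_mul_sum, Finset.sum_mul_sum]
  simp only [MonoidAlgebra.single_mul_single, one_mul]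
  rw [show (∑ l ∈ Finset.univ.filter (fun l : Fin n => l ≠ j),
      ∑ k ∈ Finset.univ.filter (fun k : Fin n => k ≠ i),
        MonoidAlgebra.single (Equiv.swap j l * Equiv.swap i k) (1 : ℂ)) =
      ∑ k ∈ Finset.univ.filter (fun k : Fin n => k ≠ i),
      ∑ l ∈ Finset.univ.filter (fun l : Fin n => l ≠ j),
        MonoidAlgebra.single (Equiv.swap j l * Equiv.swap i k) (1 : ℂ) from Finset.sum_comm]
  simp only [← Finset.sum_sub_distrib]
  rw [← Finset.sum_product']
  set F : Fin n × Fin n → MonoidAlgebra ℂ (Equiv.Perm (Fin n)) := fun p =>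
    MonoidAlgebra.single (Equiv.swap i p.1 * Equiv.swap j p.2) (1 : ℂ) -
      MonoidAlgebra.single (Equiv.swap j p.2 * Equiv.swap i p.1) (1 : ℂ) with hF
  set E : Finset (Fin n × Fin n) :=
    K.image (fun k => (j, k)) ∪ K.image (fun k => (k, k)) ∪ K.image (fun k => (k, i)) with hE
  have hmemK : ∀ k : Fin n, k ∈ K ↔ k ≠ i ∧ k ≠ j := by
    intro k; simp [hK]
  have hsub : E ⊆ (Finset.univ.filter (fun k : Fin n => k ≠ i)) ×ˢ
      (Finset.univ.filter (fun l : Fin n => l ≠ j)) := by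
    intro p hp
    simp only [hE, Finset.mem_union, Finset.mem_image] at hp
    simp only [Finset.mem_product, Finset.mem_filter, Finset.mem_univ, true_and]
    rcases hp with (⟨k, hk, rfl⟩ | ⟨k, hk, rfl⟩) | ⟨k, hk, rfl⟩ <;>
      rw [hmemK] at hk
    · exact ⟨Ne.symm hij, hk.2⟩
    · exact ⟨hk.1, hk.2⟩
    · exact ⟨hk.1, hij⟩
  have hzero : ∀ p ∈ (Finset.univ.filter (fun k : Fin n => k ≠ i)) ×ˢ
      (Finset.univ.filter (fun l : Fin n => l ≠ j)), p ∉ E → F p = 0 := by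
    rintro ⟨k, l⟩ hp hpE
    simp only [Finset.mem_product, Finset.mem_filter, Finset.mem_univ, true_and] at hp
    obtain ⟨hki, hlj⟩ := hp
    by_cases hkj : k = j
    · subst hkj
      by_cases hli : l = i
      · subst hli
        simp only [hF, Equiv.swap_comm l k, Equiv.swap_mul_self, sub_self]
      · exfalso
        exact hpE (by
          simp only [hE, Finset.mem_union, Finset.mem_image]
          exact Or.inl (Or.inl ⟨l, (hmemK l).2 ⟨hli, hlj⟩, rfl⟩))
    · by_cases hkl : k = l
      · subst hkl
        exfalso
        exact hpE (by
          simp only [hE, Finset.mem_union, Finset.mem_image]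
          exact Or.inl (Or.inr ⟨k, (hmemK k).2 ⟨hki, hkj⟩, rfl⟩))
      · by_cases hli : l = i
        · subst hli
          exfalso
          exact hpE (by
            simp only [hE, Finset.mem_union, Finset.mem_image]
            exact Or.inr ⟨k, (hmemK k).2 ⟨hki, hkj⟩, rfl⟩)
        · simp only [hF]
          rw [swap_comm4 hij (fun h => hli h.symm) hkj hkl, sub_self]
  rw [← Finset.sum_subset hsub hzero, hE]
  have hd1 : Disjoint (K.image (fun k => ((j : Fin n), k))) (K.image (fun k => (k, k))) := by
    rw [Finset.disjoint_left]
    rintro ⟨x, y⟩ hA hB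
    simp only [Finset.mem_image, Prod.mk.injEq] at hA hB
    obtain ⟨k, hk, hk1, hk2⟩ := hA
    obtain ⟨m, hm, hm1, hm2⟩ := hB
    rw [hmemK] at hk
    exact hk.2 (by rw [hk2, ← hm2, hm1, ← hk1])
  have hd2 : Disjoint (K.image (fun k => ((j : Fin n), k)) ∪ K.image (fun k => (k, k)))
      (K.image (fun k => (k, i))) := by
    rw [Finset.disjoint_left]
    rintro ⟨x, y⟩ hA hB
    simp only [Finset.mem_union, Finset.mem_image, Prod.mk.injEq] at hA hB
    obtain ⟨m, hm, hm1, hm2⟩ := hB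
    rw [hmemK] at hm
    rcases hA with ⟨k, hk, hk1, hk2⟩ | ⟨k, hk, hk1, hk2⟩ <;> rw [hmemK] at hk
    · exact hk.1 (by rw [hk2, ← hm2])
    · exact hk.1 (by rw [hk2, ← hm2])
  rw [Finset.sum_union hd2, Finset.sum_union hd1]
  rw [Finset.sum_image (fun x _ y _ h => by simpa using (Prod.mk.injEq .. ▸ h).2),
    Finset.sum_image (fun x _ y _ h => by simpa using (Prod.mk.injEq .. ▸ h).1),
    Finset.sum_image (fun x _ y _ h => by simpa using (Prod.mk.injEq .. ▸ h).1)]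
  rw [← Finset.sum_add_distrib, ← Finset.sum_add_distrib]
  refine Finset.sum_congr rfl fun k hk => ?_
  rw [hmemK] at hk
  obtain ⟨hki, hkj⟩ := hk
  simp only [hF]
  rw [swapL1 hij (Ne.symm hki) (Ne.symm hkj), swapL2 hij (Ne.symm hki) (Ne.symm hkj),
    swapL3 hij (Ne.symm hki) (Ne.symm hkj), swapL4 hij (Ne.symm hki) (Ne.symm hkj),
    swapL5 hij (Ne.symm hki) (Ne.symm hkj)]
  abel

/-- The element `y_i = a·1 + (1/2) Σ_{j ≠ i} (i j)` of the group algebra `ℂ[S_n]`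
(image of the generator `y_i` of the degenerate affine Hecke algebra, in its second
presentation, under the evaluation homomorphism). -/
noncomputable def yElt (n : ℕ) (a : ℂ) (i : Fin n) :
    MonoidAlgebra ℂ (Equiv.Perm (Fin n)) :=
  a • (1 : MonoidAlgebra ℂ (Equiv.Perm (Fin n))) +
    (1 / 2 : ℂ) • ∑ j ∈ Finset.univ.filter (fun j : Fin n => j ≠ i),
      MonoidAlgebra.single (Equiv.swap i j) (1 : ℂ)

/-- In `ℂ[S_n]`, with `y_i = a + (1/2)Σ_{j≠i}(i j)`:
(a) `σ y_i σ⁻¹ = y_{σ(i)}` for all `σ ∈ S_n`;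
(b) for `i ≠ j`, `[y_i, y_j] = (1/4) Σ_{k ≠ i,j} ((i j k) − (j i k))`, where the
3-cycle `(i j k)` (sending `i ↦ j, j ↦ k, k ↦ i`) is `swap i j * swap j k` and the
3-cycle `(j i k)` (sending `j ↦ i, i ↦ k, k ↦ j`) is `swap i j * swap i k`. -/
theorem stmt10 (n : ℕ) (a : ℂ) :
    (∀ (σ : Equiv.Perm (Fin n)) (i : Fin n),
        MonoidAlgebra.single σ (1 : ℂ) * yElt n a i *
            MonoidAlgebra.single σ⁻¹ (1 : ℂ) =
          yElt n a (σ i)) ∧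
      (∀ i j : Fin n, i ≠ j →
        yElt n a i * yElt n a j - yElt n a j * yElt n a i =
          (1 / 4 : ℂ) •
            ∑ k ∈ Finset.univ.filter (fun k : Fin n => k ≠ i ∧ k ≠ j),
              (MonoidAlgebra.single (Equiv.swap i j * Equiv.swap j k) (1 : ℂ) -
                MonoidAlgebra.single (Equiv.swap i j * Equiv.swap i k) (1 : ℂ))) := by
  constructor
  · intro σ i
    simp only [yElt, mul_add, add_mul, Finset.mul_sum, Finset.sum_mul,
      Algebra.mul_smul_comm, Algebra.smul_mul_assoc, mul_one, one_mul,
      MonoidAlgebra.single_mul_single, mul_inv_cancel]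
    congr 1
    congr 1
    refine Finset.sum_equiv σ ?_ ?_
    · intro k
      simp only [Finset.mem_filter, Finset.mem_univ, true_and, ne_eq,
        EmbeddingLike.apply_eq_iff_eq]
    · intro k hk
      rw [← Equiv.swap_apply_apply]
  · intro i j hij
    have key : ∀ x y : MonoidAlgebra ℂ (Equiv.Perm (Fin n)),
        (a • 1 + (1 / 2 : ℂ) • x) * (a • 1 + (1 / 2 : ℂ) • y) -
          (a • 1 + (1 / 2 : ℂ) • y) * (a • 1 + (1 / 2 : ℂ) • x) =
        (1 / 4 : ℂ) • (x * y - y * x) := by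
      intro x y
      simp only [mul_add, add_mul, smul_mul_assoc, mul_smul_comm, one_mul, mul_one]
      match_scalars <;> ring
    simp only [yElt]
    rw [key, Tcomm_s10 n i j hij]
end

section
/- Let k be an algebraically closed field of characteristic zero, G a finite abelian group, and n ∈ ℕ. Let W = G^n ⋊ S_n be the wreath product, where S_n = Equiv.Perm (Fin n) acts on G^n = (Fin n → G) by permuting coordinates: (σ · g)_i = g_{σ^{-1}(i)}. Then for every finite-dimensional irreducible k-linear representation V of W there exist: a function χ : Fin n → Hom(G, kˣ) assigning to each coordinate a character of G; the stabilizer subgroup H = { σ ∈ S_n : χ ∘ σ = χ } of χ in S_n, giving the subgroup G^n ⋊ H of W; and a finite-dimensional irreducible k-linear representation (M, ρ) of H, such that V is isomorphic as a W-representation to the induced representation k[W] ⊗_{k[G^n ⋊ H]} N, where N is the representation of G^n ⋊ H on M in which the element (g, σ) acts by the scalar Π_{i} χ_i(g_i) times ρ(σ). -/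
/-- The action of the symmetric group `S_n` on `G^n = (Fin n → G)` by permutation of
the coordinates: `(σ • g) i = g (σ⁻¹ i)`. -/
def wreathPhi (G : Type) [Group G] (n : ℕ) :
    Equiv.Perm (Fin n) →* MulAut (Fin n → G) where
  toFun σ := { Equiv.arrowCongr σ (Equiv.refl G) with map_mul' := fun _ _ => rfl }
  map_one' := by ext g i; rfl
  map_mul' σ τ := by ext g i; rfl

/-- The wreath product `G ≀ S_n = G^n ⋊ S_n`. -/
def Wreath (G : Type) [Group G] (n : ℕ) : Type :=
  (Fin n → G) ⋊[wreathPhi G n] Equiv.Perm (Fin n)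

instance (G : Type) [Group G] (n : ℕ) : Group (Wreath G n) :=
  inferInstanceAs (Group ((Fin n → G) ⋊[wreathPhi G n] Equiv.Perm (Fin n)))

/-- The stabilizer `H = {σ ∈ S_n : χ ∘ σ = χ}` of a tuple of characters
`χ : Fin n → Hom(G, kˣ)`. -/
def stabSubgroup (k : Type) [Field k] (G : Type) [Group G] (n : ℕ)
    (χ : Fin n → (G →* kˣ)) : Subgroup (Equiv.Perm (Fin n)) where
  carrier := {σ | χ ∘ σ = χ}
  one_mem' := by ext i; rfl
  mul_mem' := by
    intro σ τ hσ hτ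
    have : χ ∘ ⇑(σ * τ) = (χ ∘ σ) ∘ τ := rfl
    simp only [Set.mem_setOf_eq] at hσ hτ ⊢
    rw [this, hσ, hτ]
  inv_mem' := by
    intro σ hσ
    simp only [Set.mem_setOf_eq] at hσ ⊢
    funext i
    have := congrFun hσ (σ⁻¹ i)
    simpa using this.symm

/-- The subgroup `G^n ⋊ H` of the wreath product `G^n ⋊ S_n`, as a semidirect
product. -/
def SubWreath (k : Type) [Field k] (G : Type) [Group G] (n : ℕ)
    (χ : Fin n → (G →* kˣ)) : Type :=
  (Fin n → G) ⋊[(wreathPhi G n).comp (stabSubgroup k G n χ).subtype]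
    ↥(stabSubgroup k G n χ)

instance (k : Type) [Field k] (G : Type) [Group G] (n : ℕ) (χ : Fin n → (G →* kˣ)) :
    Group (SubWreath k G n χ) :=
  inferInstanceAs (Group ((Fin n → G) ⋊[(wreathPhi G n).comp
    (stabSubgroup k G n χ).subtype] ↥(stabSubgroup k G n χ)))

/-- The inclusion `G^n ⋊ H → G^n ⋊ S_n`. -/
def wreathInc (k : Type) [Field k] (G : Type) [Group G] (n : ℕ)
    (χ : Fin n → (G →* kˣ)) : SubWreath k G n χ →* Wreath G n :=
  SemidirectProduct.map (MonoidHom.id (Fin n → G)) (stabSubgroup k G n χ).subtype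
    (fun _ => rfl)

/-- The representation `N` of `G^n ⋊ H` associated to a tuple of characters `χ` with
stabilizer `H` and a representation `ρM` of `H`:  the element `(g, σ)` acts by the
scalar `Π_i χ_i (g_i)` times `ρM σ`. -/
noncomputable def scaledRep (k : Type) [Field k] (G : Type) [CommGroup G] [Fintype G]
    (n : ℕ) (χ : Fin n → (G →* kˣ)) (d : ℕ)
    (ρM : Representation k ↥(stabSubgroup k G n χ) (Fin d → k)) :
    Representation k (SubWreath k G n χ) (Fin d → k) where
  toFun w := ((∏ i, χ i (w.left i) : kˣ) : k) • ρM w.right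
  map_one' := by
    change ((∏ i, χ i ((1 : Fin n → G) i) : kˣ) : k) • ρM 1 = 1
    simp [SemidirectProduct.one_left, SemidirectProduct.one_right]
  map_mul' w₁ w₂ := by
    have hσ : χ ∘ ⇑(w₁.right : Equiv.Perm (Fin n)) = χ := w₁.right.2
    have key : (∏ i, χ i ((w₁ * w₂).left i)) =
        (∏ i, χ i (w₁.left i)) * ∏ i, χ i (w₂.left i) := by
      have hl : (w₁ * w₂).left =
          w₁.left * (wreathPhi G n (w₁.right : Equiv.Perm (Fin n))) w₂.left := rfl
      rw [hl]
      rw [show (∏ i, χ i ((w₁.left *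
          (wreathPhi G n (w₁.right : Equiv.Perm (Fin n))) w₂.left) i)) =
          (∏ i, χ i (w₁.left i) * χ i (w₂.left ((w₁.right :
            Equiv.Perm (Fin n)).symm i))) from Finset.prod_congr rfl fun i _ => by
          simp [wreathPhi] <;> rfl]
      rw [Finset.prod_mul_distrib]
      congr 1
      rw [← Equiv.prod_comp (w₁.right : Equiv.Perm (Fin n))
        (fun i => χ i (w₂.left ((w₁.right : Equiv.Perm (Fin n)).symm i)))]
      refine Finset.prod_congr rfl fun j _ => ?_
      simp only [Equiv.symm_apply_apply]
      have := congrFun hσ j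
      simp only [Function.comp_apply] at this
      rw [this]
    have hr : (w₁ * w₂).right = w₁.right * w₂.right := rfl
    show (↑(∏ i, χ i ((w₁ * w₂).left i)) : k) • ρM (w₁ * w₂).right =
      ((↑(∏ i, χ i (w₁.left i)) : k) • ρM w₁.right) *
        ((↑(∏ i, χ i (w₂.left i)) : k) • ρM w₂.right)
    rw [hr, key, map_mul, smul_mul_assoc, mul_smul_comm, smul_smul]
    push_cast
    ring_nf

/-- A representation is irreducible if the underlying space is nonzero and has no
invariant submodules other than `⊥` and `⊤`. -/
def IsIrreducibleRep {k Γ V : Type*} [CommRing k] [Monoid Γ] [AddCommGroup V]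
    [Module k V] (ρ : Representation k Γ V) : Prop :=
  (∃ x : V, x ≠ 0) ∧
    ∀ p : Submodule k V, (∀ (g : Γ) (x : V), x ∈ p → ρ g x ∈ p) → p = ⊥ ∨ p = ⊤

section Helpers

variable {k V : Type*} [Field k] [AddCommGroup V] [Module k V]

/-- Simultaneous eigenspace of a family of endomorphisms. -/
def espace {A : Type*} (f : A → (V →ₗ[k] V)) (μ : A → k) : Submodule k V where
  carrier := {v | ∀ a, f a v = μ a • v}
  add_mem' := fun hx hy a => by rw [map_add, hx a, hy a, smul_add]
  zero_mem' := fun a => by rw [map_zero, smul_zero]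
  smul_mem' := fun c x hx a => by rw [map_smul, hx a]; exact smul_comm _ _ _

lemma mem_espace {A : Type*} {f : A → (V →ₗ[k] V)} {μ : A → k} {v : V} :
    v ∈ espace f μ ↔ ∀ a, f a v = μ a • v := Iff.rfl

lemma eig_indep {A ι : Type*} (f : A → (V →ₗ[k] V)) (μ : ι → A → k)
    (s : Finset ι) (hdist : ∀ i ∈ s, ∀ j ∈ s, μ i = μ j → i = j)
    (v : ι → V) (hv : ∀ j ∈ s, v j ∈ espace f (μ j))
    (hsum : ∑ j ∈ s, v j = 0) : ∀ j ∈ s, v j = 0 := by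
  classical
  induction s using Finset.induction generalizing v with
  | empty => simp
  | @insert j₀ t hj₀t ih =>
    have hsum' : v j₀ + ∑ j ∈ t, v j = 0 := by rwa [Finset.sum_insert hj₀t] at hsum
    have key : ∀ (a : A), ∀ j ∈ t, (μ j a - μ j₀ a) • v j = 0 := by
      intro a
      have e1 : μ j₀ a • v j₀ + ∑ j ∈ t, μ j a • v j = 0 := by
        have h2 : f a (v j₀ + ∑ j ∈ t, v j) = 0 := by rw [hsum']; simp
        rwa [map_add, map_sum, (hv j₀ (Finset.mem_insert_self _ _)) a,
          Finset.sum_congr rfl (fun j hj => (hv j (Finset.mem_insert_of_mem hj)) a)] at h2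
      have e2 : μ j₀ a • v j₀ + ∑ j ∈ t, μ j₀ a • v j = 0 := by
        have := congrArg (fun x => μ j₀ a • x) hsum'
        simpa [smul_add, Finset.smul_sum] using this
      have h0 : ∑ j ∈ t, (μ j a - μ j₀ a) • v j = 0 := by
        calc ∑ j ∈ t, (μ j a - μ j₀ a) • v j
            = ∑ j ∈ t, (μ j a • v j - μ j₀ a • v j) := by simp [sub_smul]
          _ = (∑ j ∈ t, μ j a • v j) - ∑ j ∈ t, μ j₀ a • v j := Finset.sum_sub_distrib _ _
          _ = (μ j₀ a • v j₀ + ∑ j ∈ t, μ j a • v j) -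
              (μ j₀ a • v j₀ + ∑ j ∈ t, μ j₀ a • v j) := by abel
          _ = 0 := by rw [e1, e2, sub_zero]
      intro j hj
      exact ih (fun i hi j' hj' h => hdist i (Finset.mem_insert_of_mem hi) j'
          (Finset.mem_insert_of_mem hj') h)
        (fun j' => (μ j' a - μ j₀ a) • v j')
        (fun j' hj' => Submodule.smul_mem _ _ (hv j' (Finset.mem_insert_of_mem hj')))
        h0 j hj
    have hz : ∀ j ∈ t, v j = 0 := by
      intro j hj
      have hjne : j ≠ j₀ := fun h => hj₀t (h ▸ hj)
      have hμ : μ j ≠ μ j₀ := fun h => hjne (hdist j (Finset.mem_insert_of_mem hj) j₀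
        (Finset.mem_insert_self _ _) h)
      obtain ⟨a, ha⟩ := Function.ne_iff.mp hμ
      rcases smul_eq_zero.mp (key a j hj) with h | h
      · exact absurd (sub_eq_zero.mp h) ha
      · exact h
    intro j hj
    rcases Finset.mem_insert.mp hj with rfl | hj'
    · have : ∑ j ∈ t, v j = 0 := Finset.sum_eq_zero hz
      rw [this, add_zero] at hsum'
      exact hsum'
    · exact hz j hj'

lemma isIrreducibleRep_of_equiv {k Γ V W : Type*} [CommRing k] [Monoid Γ]
    [AddCommGroup V] [Module k V] [AddCommGroup W] [Module k W]
    (ρ₁ : Representation k Γ V) (ρ₂ : Representation k Γ W)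
    (e : V ≃ₗ[k] W) (he : ∀ g x, e (ρ₁ g x) = ρ₂ g (e x))
    (h : IsIrreducibleRep ρ₁) : IsIrreducibleRep ρ₂ := by
  obtain ⟨⟨x, hx⟩, hsub⟩ := h
  refine ⟨⟨e x, by simpa using hx⟩, ?_⟩
  intro p hp
  have hinv : ∀ (g : Γ) (y : V), y ∈ p.comap (e : V →ₗ[k] W) → ρ₁ g y ∈ p.comap (e : V →ₗ[k] W) := by
    intro g y hy
    simp only [Submodule.mem_comap] at hy ⊢
    show e (ρ₁ g y) ∈ p
    rw [he]
    exact hp g _ hy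
  rcases hsub _ hinv with h | h
  · left
    rw [Submodule.eq_bot_iff] at h ⊢
    intro y hy
    have : e.symm y ∈ p.comap (e : V →ₗ[k] W) := by
      simp only [Submodule.mem_comap]; simpa using hy
    have := h _ this
    have := congrArg e this
    simpa using this
  · right
    rw [Submodule.eq_top_iff'] at h ⊢
    intro y
    have := h (e.symm y)
    simp only [Submodule.mem_comap] at this
    simpa using this

/-- Restriction of a representation to an invariant submodule. -/
def resRep {Γ : Type*} [Monoid Γ] (ρ : Representation k Γ V) (p : Submodule k V)
    (h : ∀ g, ∀ v ∈ p, ρ g v ∈ p) : Representation k Γ p where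
  toFun g := (ρ g).restrict (h g)
  map_one' := by ext v; simp [LinearMap.restrict_apply]
  map_mul' g₁ g₂ := by ext v; simp [LinearMap.restrict_apply]

@[simp] lemma resRep_apply {Γ : Type*} [Monoid Γ] (ρ : Representation k Γ V)
    (p : Submodule k V) (h : ∀ g, ∀ v ∈ p, ρ g v ∈ p) (g : Γ) (v : p) :
    (resRep ρ p h g v : V) = ρ g v := rfl

/-- Conjugation of a representation by a linear equivalence. -/
def conjRep {Γ W : Type*} [Monoid Γ] [AddCommGroup W] [Module k W]
    (ρ : Representation k Γ V) (e : V ≃ₗ[k] W) : Representation k Γ W where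
  toFun g := ((e.conj (ρ g) : W →ₗ[k] W))
  map_one' := by ext w; simp [LinearEquiv.conj_apply]
  map_mul' g₁ g₂ := by ext w; simp [LinearEquiv.conj_apply]

@[simp] lemma conjRep_apply {Γ W : Type*} [Monoid Γ] [AddCommGroup W] [Module k W]
    (ρ : Representation k Γ V) (e : V ≃ₗ[k] W) (g : Γ) (w : W) :
    conjRep ρ e g w = e (ρ g (e.symm w)) := by simp [conjRep, LinearEquiv.conj_apply]

lemma conjRep_intertwine {Γ W : Type*} [Monoid Γ] [AddCommGroup W] [Module k W]
    (ρ : Representation k Γ V) (e : V ≃ₗ[k] W) (g : Γ) (v : V) :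
    e (ρ g v) = conjRep ρ e g (e v) := by simp

end Helpers


section WreathLemmas

variable {k : Type} [Field k] {G : Type} [Group G] {n : ℕ}

lemma wreathPhi_apply (σ : Equiv.Perm (Fin n)) (a : Fin n → G) (i : Fin n) :
    (wreathPhi G n σ) a i = a (σ⁻¹ i) := rfl

lemma wreath_decomp (w : Wreath G n) :
    w = SemidirectProduct.inl w.left * SemidirectProduct.inr w.right :=
  (SemidirectProduct.inl_left_mul_inr_right w).symm

lemma wreath_conj (σ : Equiv.Perm (Fin n)) (a : Fin n → G) :
    (SemidirectProduct.inr σ : Wreath G n) * SemidirectProduct.inl a =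
      SemidirectProduct.inl ((wreathPhi G n σ) a) * SemidirectProduct.inr σ := by
  rw [SemidirectProduct.inl_aut, mul_assoc, ← map_mul, inv_mul_cancel, map_one, mul_one]

lemma wreathPhi_inv_cancel (σ : Equiv.Perm (Fin n)) (a : Fin n → G) :
    (wreathPhi G n σ) ((wreathPhi G n σ⁻¹) a) = a := by
  funext i
  rw [wreathPhi_apply, wreathPhi_apply, inv_inv]
  exact congrArg a (σ.apply_symm_apply i)

lemma wreath_conj' (σ : Equiv.Perm (Fin n)) (a : Fin n → G) :
    (SemidirectProduct.inl a : Wreath G n) * SemidirectProduct.inr σ =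
      SemidirectProduct.inr σ * SemidirectProduct.inl ((wreathPhi G n σ⁻¹) a) := by
  rw [wreath_conj σ ((wreathPhi G n σ⁻¹) a), wreathPhi_inv_cancel]

lemma phi_mulSingle (σ : Equiv.Perm (Fin n)) (j : Fin n) (g : G) :
    (wreathPhi G n σ) (Pi.mulSingle j g) = Pi.mulSingle (σ j) g := by
  funext i
  rw [wreathPhi_apply]
  rcases eq_or_ne i (σ j) with rfl | hne
  · rw [show σ⁻¹ (σ j) = j from σ.symm_apply_apply j]; simp
  · have h1 : σ⁻¹ i ≠ j := fun h => hne (by rw [← h]; simp)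
    rw [Pi.mulSingle_eq_of_ne h1, Pi.mulSingle_eq_of_ne hne]

lemma mem_stab {χ : Fin n → (G →* kˣ)} {σ : Equiv.Perm (Fin n)} :
    σ ∈ stabSubgroup k G n χ ↔ ∀ j, χ (σ j) = χ j := by
  change χ ∘ ⇑σ = χ ↔ _
  rw [funext_iff]
  simp [Function.comp]

lemma wreathInc_eq {χ : Fin n → (G →* kˣ)} (x : SubWreath k G n χ) :
    wreathInc k G n χ x = SemidirectProduct.inl x.left *
      SemidirectProduct.inr (x.right : Equiv.Perm (Fin n)) := by
  exact (SemidirectProduct.inl_left_mul_inr_right (wreathInc k G n χ x)).symm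


/-- The inclusion of `G^n` into the wreath product, typed at `Wreath G n`. -/
noncomputable def winl {G : Type} [Group G] {n : ℕ} : (Fin n → G) →* Wreath G n :=
  SemidirectProduct.inl

/-- The inclusion of `S_n` into the wreath product, typed at `Wreath G n`. -/
noncomputable def winr {G : Type} [Group G] {n : ℕ} : Equiv.Perm (Fin n) →* Wreath G n :=
  SemidirectProduct.inr

lemma winl_left_mul_winr_right (w : Wreath G n) : winl w.left * winr w.right = w :=
  SemidirectProduct.inl_left_mul_inr_right w

lemma wconj (σ : Equiv.Perm (Fin n)) (a : Fin n → G) :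
    winr σ * winl a = winl ((wreathPhi G n σ) a) * (winr σ : Wreath G n) :=
  wreath_conj σ a

lemma wconj' (σ : Equiv.Perm (Fin n)) (a : Fin n → G) :
    winl a * winr σ = (winr σ : Wreath G n) * winl ((wreathPhi G n σ⁻¹) a) :=
  wreath_conj' σ a

lemma wreathInc_eq' {χ : Fin n → (G →* kˣ)} (x : SubWreath k G n χ) :
    wreathInc k G n χ x = winl x.left * winr (x.right : Equiv.Perm (Fin n)) :=
  wreathInc_eq x

end WreathLemmas

set_option maxHeartbeats 2000000 in
/-- Let `k` be an algebraically closed field of characteristic zero,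
`G` a finite abelian group and `n ∈ ℕ`.  Every finite-dimensional irreducible
representation `(V, ρ)` of the wreath product `W = G^n ⋊ S_n` is isomorphic to a
representation induced from `G^n ⋊ H`, where `H ≤ S_n` is the stabilizer of a tuple of
characters `χ : Fin n → Hom(G, kˣ)`, and `G^n ⋊ H` acts on an irreducible
representation `M` of `H` by `(g, σ) ↦ (Π_i χ_i(g_i)) ρ_M(σ)`. -/


theorem stmt11 (k : Type) [Field k] [IsAlgClosed k] [CharZero k]
    (G : Type) [CommGroup G] [Fintype G] (n : ℕ)
    (V : Type) [AddCommGroup V] [Module k V] [FiniteDimensional k V]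
    (ρ : Representation k (Wreath G n) V) (hirr : IsIrreducibleRep ρ) :
    ∃ (χ : Fin n → (G →* kˣ)) (d : ℕ)
      (ρM : Representation k ↥(stabSubgroup k G n χ) (Fin d → k)),
      IsIrreducibleRep ρM ∧
        ∃ e : V ≃ₗ[k] IndModule (wreathInc k G n χ) (scaledRep k G n χ d ρM),
          ∀ (w : Wreath G n) (x : V),
            e (ρ w x) = indRep (wreathInc k G n χ) (scaledRep k G n χ d ρM) w (e x) := by
    classical
  obtain ⟨⟨v₁, hv₁⟩, hV⟩ := hirr
  haveI : Nontrivial V := ⟨⟨v₁, 0, hv₁⟩⟩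
  have htopne : (⊤ : Submodule k V) ≠ ⊥ := fun h =>
    hv₁ ((Submodule.eq_bot_iff _).mp h v₁ trivial)
  -- a minimal nonzero `G^n`-invariant subspace U₀
  have hSne : ({m | ∃ p : Submodule k V,
      (p ≠ ⊥ ∧ ∀ a : Fin n → G, ∀ v ∈ p, ρ (winl a) v ∈ p) ∧
        Module.finrank k ↥p = m}).Nonempty :=
    ⟨_, ⊤, ⟨htopne, fun _ _ _ => Submodule.mem_top⟩, rfl⟩
  obtain ⟨U₀, ⟨hU₀ne, hU₀inv⟩, hU₀rank⟩ := Nat.sInf_mem hSne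
  have hminimal : ∀ p : Submodule k V, p ≠ ⊥ →
      (∀ a : Fin n → G, ∀ v ∈ p, ρ (winl a) v ∈ p) →
      Module.finrank k ↥U₀ ≤ Module.finrank k ↥p := by
    intro p h1 h2
    rw [hU₀rank]
    exact Nat.sInf_le ⟨p, ⟨h1, h2⟩, rfl⟩
  have hinl_mul : ∀ a b : Fin n → G, (winl (a * b) : Wreath G n) =
      winl a * winl b := fun a b => map_mul _ _ _
  have hrho_mul : ∀ (x y : Wreath G n) (v : V), ρ (x * y) v = ρ x (ρ y v) := by
    intro x y v; rw [map_mul]; rfl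
  have hcomm : ∀ (a b : Fin n → G) (v : V),
      ρ (winl a) (ρ (winl b) v) =
        ρ (winl b) (ρ (winl a) v) := by
    intro a b v
    rw [← hrho_mul, ← hrho_mul, ← hinl_mul, ← hinl_mul, mul_comm a b]
  -- `G^n` acts by scalars on U₀
  have hscal : ∀ a : Fin n → G, ∃ c : k, ∀ v ∈ U₀,
      ρ (winl a) v = c • v := by
    intro a
    haveI : Nontrivial ↥U₀ := Submodule.nontrivial_iff_ne_bot.mpr hU₀ne
    obtain ⟨c, hc⟩ := Module.End.exists_eigenvalue
      ((ρ (winl a)).restrict (hU₀inv a))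
    refine ⟨c, ?_⟩
    have heig : ∀ u : ↥U₀,
        u ∈ Module.End.eigenspace ((ρ (winl a)).restrict (hU₀inv a)) c →
        ρ (winl a) ↑u = c • (↑u : V) := by
      intro u hu
      have h2 := congrArg Subtype.val (Module.End.mem_eigenspace_iff.mp hu)
      simpa [LinearMap.restrict_apply] using h2
    set E := (Module.End.eigenspace ((ρ (winl a)).restrict (hU₀inv a)) c).map
      U₀.subtype with hEdef
    have hEle : E ≤ U₀ := Submodule.map_subtype_le _ _
    have hEne : E ≠ ⊥ := by
      obtain ⟨u, huE, hu0⟩ := (Submodule.ne_bot_iff _).mp hc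
      exact (Submodule.ne_bot_iff _).mpr ⟨↑u, ⟨u, huE, rfl⟩, by simpa using hu0⟩
    have hEinv : ∀ b : Fin n → G, ∀ v ∈ E, ρ (winl b) v ∈ E := by
      rintro b v ⟨u, hu, rfl⟩
      refine ⟨⟨ρ (winl b) ↑u, hU₀inv b ↑u u.2⟩,
        Module.End.mem_eigenspace_iff.mpr (Subtype.ext ?_), rfl⟩
      have h3 : ρ (winl a) (ρ (winl b) ↑u) =
          c • ρ (winl b) (↑u : V) := by
        rw [hcomm a b, heig u hu, map_smul]
      simpa [LinearMap.restrict_apply] using h3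
    have hEU₀ : E = U₀ := Submodule.eq_of_le_of_finrank_le hEle (hminimal E hEne hEinv)
    intro v hv
    rw [← hEU₀] at hv
    obtain ⟨u, hu, rfl⟩ := hv
    exact heig u hu
  choose lam hlam using hscal
  obtain ⟨v₀, hv₀U₀, hv₀⟩ := (Submodule.ne_bot_iff U₀).mp hU₀ne
  have scal_eq : ∀ (c₁ c₂ : k), c₁ • v₀ = c₂ • v₀ → c₁ = c₂ := by
    intro c₁ c₂ h
    by_contra hne
    have h0 : (c₁ - c₂) • v₀ = 0 := by rw [sub_smul, h, sub_self]
    rcases smul_eq_zero.mp h0 with h' | h'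
    · exact hne (sub_eq_zero.mp h')
    · exact hv₀ h'
  have hlam_mul : ∀ a b : Fin n → G, lam (a * b) = lam a * lam b := by
    intro a b
    refine scal_eq _ _ ?_
    rw [← hlam (a * b) v₀ hv₀U₀]
    have h1 : (winl (a * b) : Wreath G n) =
        winl a * winl b := map_mul _ _ _
    rw [h1, map_mul, Module.End.mul_apply, hlam b v₀ hv₀U₀, map_smul,
      hlam a v₀ hv₀U₀, smul_smul, mul_comm (lam b) (lam a)]
  have hlam_one : lam 1 = 1 := by
    refine scal_eq _ _ ?_
    rw [← hlam 1 v₀ hv₀U₀]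
    have h1 : (winl (1 : Fin n → G) : Wreath G n) = 1 := map_one _
    rw [h1, map_one, one_smul]
    rfl
  have hlam_ne : ∀ a : Fin n → G, lam a ≠ 0 := by
    intro a h
    have h1 := hlam_mul a a⁻¹
    rw [mul_inv_cancel, hlam_one, h, zero_mul] at h1
    exact one_ne_zero h1
  let lamU : (Fin n → G) →* kˣ :=
    { toFun := fun a => Units.mk0 (lam a) (hlam_ne a)
      map_one' := by ext; simp [hlam_one]
      map_mul' := fun a b => by ext; simp [hlam_mul] }
  let χ : Fin n → (G →* kˣ) := fun i => lamU.comp (MonoidHom.mulSingle (fun _ => G) i)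
  have hprod : ∀ a : Fin n → G, (∏ i, χ i (a i)) = lamU a := by
    intro a
    calc (∏ i, χ i (a i)) = ∏ i, lamU (Pi.mulSingle i (a i)) := rfl
      _ = lamU (∏ i, Pi.mulSingle i (a i)) := (map_prod lamU _ _).symm
      _ = lamU a := by rw [Finset.univ_prod_mulSingle]
  have hprodk : ∀ a : Fin n → G, ((∏ i, χ i (a i) : kˣ) : k) = lam a := by
    intro a; rw [hprod]; rfl
  have hχ_single : ∀ (i : Fin n) (g : G), ((χ i g : kˣ) : k) = lam (Pi.mulSingle i g) :=
    fun i g => rfl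
  -- the eigenspace family
  set fA : (Fin n → G) → (V →ₗ[k] V) := fun a => ρ (winl a) with hfA
  set U : Submodule k V := espace fA lam with hUdef
  have hv₀U : v₀ ∈ U := fun a => hlam a v₀ hv₀U₀
  have hmap : ∀ (σ : Equiv.Perm (Fin n)) (μ : (Fin n → G) → k), ∀ v ∈ espace fA μ,
      ρ (winr σ) v ∈ espace fA (fun a => μ ((wreathPhi G n σ⁻¹) a)) := by
    intro σ μ v hv a
    show fA a (ρ (winr σ) v) = _
    calc fA a (ρ (winr σ) v)
        = ρ (winl a * winr σ) v := by
          rw [map_mul]; rfl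
      _ = ρ (winr σ * winl ((wreathPhi G n σ⁻¹) a)) v := by
          rw [wconj' σ a]
      _ = ρ (winr σ) (fA ((wreathPhi G n σ⁻¹) a) v) := by
          rw [map_mul]; rfl
      _ = ρ (winr σ) (μ ((wreathPhi G n σ⁻¹) a) • v) := by
          rw [hv ((wreathPhi G n σ⁻¹) a)]
      _ = μ ((wreathPhi G n σ⁻¹) a) • ρ (winr σ) v := map_smul _ _ _
  have hlam_perm : ∀ (σ : Equiv.Perm (Fin n)) (a : Fin n → G),
      lamU ((wreathPhi G n σ) a) = ∏ j, χ (σ j) (a j) := by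
    intro σ a
    rw [← hprod ((wreathPhi G n σ) a)]
    rw [← Equiv.prod_comp σ (fun i => χ i (((wreathPhi G n σ) a) i))]
    refine Finset.prod_congr rfl (fun j _ => ?_)
    congr 1
    rw [wreathPhi_apply, show σ⁻¹ (σ j) = j from σ.symm_apply_apply j]
  have hlam_stab : ∀ σ ∈ stabSubgroup k G n χ, ∀ a : Fin n → G,
      lam ((wreathPhi G n σ) a) = lam a := by
    intro σ hσ a
    have h1 := hlam_perm σ a
    have h2 : (∏ j, χ (σ j) (a j)) = ∏ j, χ j (a j) :=
      Finset.prod_congr rfl (fun j _ => by rw [mem_stab.mp hσ j])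
    have h3 := h1.trans (h2.trans (hprod a))
    calc lam ((wreathPhi G n σ) a) = ((lamU ((wreathPhi G n σ) a) : kˣ) : k) := rfl
      _ = ((lamU a : kˣ) : k) := by rw [h3]
      _ = lam a := rfl
  -- coset representatives
  haveI : Fintype (Equiv.Perm (Fin n) ⧸ stabSubgroup k G n χ) := Fintype.ofFinite _
  set rep : (Equiv.Perm (Fin n) ⧸ stabSubgroup k G n χ) → Equiv.Perm (Fin n) :=
    fun q => Quotient.out q with hrepdef
  have hrep : ∀ q, (QuotientGroup.mk (rep q) : Equiv.Perm (Fin n) ⧸ stabSubgroup k G n χ) = q :=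
    fun q => QuotientGroup.out_eq' q
  have hmemH : ∀ σ : Equiv.Perm (Fin n),
      (rep (QuotientGroup.mk σ))⁻¹ * σ ∈ stabSubgroup k G n χ := by
    intro σ
    exact QuotientGroup.eq.mp (hrep (QuotientGroup.mk σ))
  have hcancel : ∀ (σ : Equiv.Perm (Fin n)) (v : V),
      ρ (winr σ) (ρ (winr σ⁻¹) v) = v := by
    intro σ v
    have h1 : (winr σ : Wreath G n) * winr σ⁻¹ = 1 := by
      rw [← map_mul, mul_inv_cancel, map_one]
    rw [← hrho_mul, h1, map_one]
    rfl
  -- decomposition of group elements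
  have hdec : ∀ w : Wreath G n, ∃ (q : Equiv.Perm (Fin n) ⧸ stabSubgroup k G n χ)
      (x : SubWreath k G n χ), w = winr (rep q) *
        wreathInc k G n χ x := by
    intro w
    refine ⟨QuotientGroup.mk w.right,
      ⟨(wreathPhi G n (rep (QuotientGroup.mk w.right))⁻¹) w.left,
        ⟨(rep (QuotientGroup.mk w.right))⁻¹ * w.right, hmemH w.right⟩⟩, ?_⟩
    set σ₀ := rep (QuotientGroup.mk w.right) with hσ₀
    refine Eq.trans ?_ (congrArg (winr σ₀ * ·) (wreathInc_eq' _).symm)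
    calc w = winl w.left * winr w.right := (winl_left_mul_winr_right w).symm
      _ = winl w.left * winr σ₀ *
          winr (σ₀⁻¹ * w.right) := by
            rw [mul_assoc, ← map_mul, mul_inv_cancel_left]
      _ = winr σ₀ * winl ((wreathPhi G n σ₀⁻¹) w.left) *
          winr (σ₀⁻¹ * w.right) := by rw [wconj' σ₀ w.left]
      _ = _ := by rw [mul_assoc]
  -- U is invariant under H
  have hUinvH : ∀ σ : Equiv.Perm (Fin n), σ ∈ stabSubgroup k G n χ →
      ∀ v ∈ U, ρ (winr σ) v ∈ U := by
    intro σ hσ v hv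
    have h1 := hmap σ lam v hv
    have h2 : (fun a => lam ((wreathPhi G n σ⁻¹) a)) = lam :=
      funext (fun a => hlam_stab σ⁻¹ (inv_mem hσ) a)
    rwa [h2] at h1
  haveI : FiniteDimensional k ↥U := inferInstance
  set ρHV : Representation k ↥(stabSubgroup k G n χ) V :=
    ρ.comp ((winr : Equiv.Perm (Fin n) →* Wreath G n).comp
      (stabSubgroup k G n χ).subtype) with hρHV
  set ρH : Representation k ↥(stabSubgroup k G n χ) ↥U :=
    resRep ρHV U (fun h v hv => hUinvH ↑h h.2 v hv) with hρH
  set d : ℕ := Module.finrank k ↥U with hd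
  set bU : ↥U ≃ₗ[k] (Fin d → k) := (Module.finBasis k ↥U).equivFun with hbU
  set ρM : Representation k ↥(stabSubgroup k G n χ) (Fin d → k) := conjRep ρH bU with hρM
  set τ := scaledRep k G n χ d ρM with hτ
  have hτ_apply : ∀ (x : SubWreath k G n χ) (m : Fin d → k),
      τ x m = ((∏ i, χ i (x.left i) : kˣ) : k) • ρM x.right m := fun x m => rfl
  set emb : (Fin d → k) →ₗ[k] V := U.subtype ∘ₗ (bU.symm : (Fin d → k) ≃ₗ[k] ↥U).toLinearMap
    with hemb
  have hemb_apply : ∀ m : Fin d → k, emb m = ↑(bU.symm m) := fun m => rfl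
  have hρH_coe : ∀ (h : ↥(stabSubgroup k G n χ)) (u : ↥U),
      (↑(ρH h u) : V) = ρ (winr ↑h) ↑u := fun h u => rfl
  have h_tau : ∀ (x : SubWreath k G n χ) (m : Fin d → k),
      ρ (wreathInc k G n χ x) (emb m) = emb (τ x m) := by
    intro x m
    rw [wreathInc_eq', map_mul, Module.End.mul_apply]
    have h1 : ρ (winr (↑x.right : Equiv.Perm (Fin n))) (emb m) =
        ↑(ρH x.right (bU.symm m)) := rfl
    rw [h1]
    have h2 : (↑(ρH x.right (bU.symm m)) : V) ∈ U := (ρH x.right (bU.symm m)).2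
    have h3 : ρ (winl x.left) (↑(ρH x.right (bU.symm m)) : V) =
        lam x.left • ↑(ρH x.right (bU.symm m)) := h2 x.left
    rw [h3, hτ_apply, hemb_apply, hprodk]
    have h4 : ρM x.right m = bU (ρH x.right (bU.symm m)) := by
      rw [hρM, conjRep_apply]
    rw [h4, map_smul, LinearEquiv.symm_apply_apply]
    rfl
  -- the induction map
  set Φ : (Wreath G n →₀ (Fin d → k)) →ₗ[k] V :=
    Finsupp.lsum k (fun w : Wreath G n => (ρ w) ∘ₗ emb) with hΦ
  have hΦ_single : ∀ (w : Wreath G n) (m : Fin d → k),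
      Φ (Finsupp.single w m) = ρ w (emb m) := by
    intro w m
    rw [hΦ, Finsupp.lsum_single]
    rfl
  have hker : indRel (wreathInc k G n χ) τ ≤ LinearMap.ker Φ := by
    rw [indRel, Submodule.span_le]
    rintro x ⟨g, h, m, rfl⟩
    simp only [SetLike.mem_coe, LinearMap.mem_ker, map_sub]
    rw [hΦ_single, hΦ_single, map_mul, Module.End.mul_apply, h_tau h m, sub_self]
  set Φq : IndModule (wreathInc k G n χ) τ →ₗ[k] V :=
    (indRel (wreathInc k G n χ) τ).liftQ Φ hker with hΦq
  have hΦq_mk : ∀ z, Φq (Submodule.Quotient.mk z) = Φ z := fun z => rfl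
  have hind_mk : ∀ (w : Wreath G n) (w' : Wreath G n) (m : Fin d → k),
      indRep (wreathInc k G n χ) τ w (Submodule.Quotient.mk (Finsupp.single w' m)) =
        Submodule.Quotient.mk (Finsupp.single (w * w') m) := by
    intro w w' m
    simp only [indRep, MonoidHom.coe_mk, OneHom.coe_mk]
    rw [Submodule.mapQ_apply, Finsupp.lmapDomain_apply, Finsupp.mapDomain_single]
  have heqv : ∀ (w : Wreath G n) (y : IndModule (wreathInc k G n χ) τ),
      Φq (indRep (wreathInc k G n χ) τ w y) = ρ w (Φq y) := by
    intro w y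
    obtain ⟨z, rfl⟩ := Submodule.Quotient.mk_surjective _ y
    induction z using Finsupp.induction_linear with
    | zero => simp
    | add f g hf hg =>
      rw [Submodule.Quotient.mk_add, map_add, map_add, hf, hg, map_add Φq, map_add (ρ w)]
    | single w' m =>
      rw [hind_mk, hΦq_mk, hΦq_mk, hΦ_single, hΦ_single, map_mul, Module.End.mul_apply]
  -- surjectivity of Φq
  have hv₀mem : v₀ ∈ LinearMap.range Φq := by
    refine ⟨Submodule.Quotient.mk (Finsupp.single 1 (bU ⟨v₀, hv₀U⟩)), ?_⟩
    rw [hΦq_mk, hΦ_single, map_one]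
    show emb (bU ⟨v₀, hv₀U⟩) = v₀
    rw [hemb_apply, LinearEquiv.symm_apply_apply]
  have hrangeinv : ∀ (w : Wreath G n) (x : V), x ∈ LinearMap.range Φq →
      ρ w x ∈ LinearMap.range Φq := by
    rintro w x ⟨y, rfl⟩
    exact ⟨indRep (wreathInc k G n χ) τ w y, heqv w y⟩
  have hrtop : LinearMap.range Φq = ⊤ := by
    rcases hV (LinearMap.range Φq) hrangeinv with h | h
    · rw [h] at hv₀mem
      exact absurd ((Submodule.mem_bot k).mp hv₀mem) hv₀
    · exact h
  have hsurj : Function.Surjective Φq := LinearMap.range_eq_top.mp hrtop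
  -- a spanning map for the induced module
  set Smap : ((Equiv.Perm (Fin n) ⧸ stabSubgroup k G n χ) → (Fin d → k)) →ₗ[k]
      IndModule (wreathInc k G n χ) τ :=
    LinearMap.lsum k (fun _ => Fin d → k) k
      (fun q => (indRel (wreathInc k G n χ) τ).mkQ ∘ₗ
        Finsupp.lsingle (winr (rep q))) with hSmapdef
  have hSmap : ∀ F, Smap F = ∑ q, Submodule.Quotient.mk
      (Finsupp.single (winr (rep q) : Wreath G n) (F q)) := by
    intro F
    rw [hSmapdef, LinearMap.lsum_apply]
    simp [LinearMap.sum_apply, Submodule.mkQ_apply]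
  have hSsurj : Function.Surjective Smap := by
    intro y
    obtain ⟨z, rfl⟩ := Submodule.Quotient.mk_surjective _ y
    induction z using Finsupp.induction_linear with
    | zero =>
      exact ⟨0, by rw [map_zero]; rfl⟩
    | add f g hf hg =>
      obtain ⟨F, hF⟩ := hf
      obtain ⟨F', hF'⟩ := hg
      exact ⟨F + F', by rw [map_add, hF, hF', Submodule.Quotient.mk_add]⟩
    | single w m =>
      obtain ⟨q, x, hqx⟩ := hdec w
      have hrel : (Submodule.Quotient.mk (Finsupp.single w m) :
          IndModule (wreathInc k G n χ) τ) = Submodule.Quotient.mk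
            (Finsupp.single (winr (rep q) : Wreath G n) (τ x m)) := by
        rw [Submodule.Quotient.eq]
        refine Submodule.subset_span ⟨winr (rep q), x, m, ?_⟩
        rw [← hqx]
      refine ⟨Pi.single q (τ x m), ?_⟩
      rw [hSmap, hrel]
      rw [Finset.sum_eq_single q]
      · rw [Pi.single_eq_same]
      · intro q' _ hq'
        rw [Pi.single_eq_of_ne hq', Finsupp.single_zero]
        rfl
      · intro h
        exact absurd (Finset.mem_univ q) h
  haveI : FiniteDimensional k (IndModule (wreathInc k G n χ) τ) :=
    Module.Finite.of_surjective Smap hSsurj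
  have hdim1 : Module.finrank k (IndModule (wreathInc k G n χ) τ) ≤
      Fintype.card (Equiv.Perm (Fin n) ⧸ stabSubgroup k G n χ) * d := by
    have h1 : Module.finrank k (IndModule (wreathInc k G n χ) τ) ≤
        Module.finrank k ((Equiv.Perm (Fin n) ⧸ stabSubgroup k G n χ) → (Fin d → k)) := by
      calc Module.finrank k (IndModule (wreathInc k G n χ) τ)
          = Module.finrank k ↥(LinearMap.range Smap) := by
            rw [LinearMap.range_eq_top.mpr hSsurj, finrank_top]
        _ ≤ _ := LinearMap.finrank_range_le Smap
    calc Module.finrank k (IndModule (wreathInc k G n χ) τ) ≤ _ := h1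
      _ = Fintype.card (Equiv.Perm (Fin n) ⧸ stabSubgroup k G n χ) * d := by
        rw [Module.finrank_pi_fintype]
        simp [Module.finrank_pi]
  -- the independence map
  set Jmap : ((Equiv.Perm (Fin n) ⧸ stabSubgroup k G n χ) → ↥U) →ₗ[k] V :=
    LinearMap.lsum k (fun _ => ↥U) k
      (fun q => (ρ (winr (rep q))) ∘ₗ U.subtype) with hJmapdef
  have hJmap : ∀ F, Jmap F = ∑ q, ρ (winr (rep q)) ↑(F q) := by
    intro F
    rw [hJmapdef, LinearMap.lsum_apply]
    simp [LinearMap.sum_apply]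
  have hμdist : ∀ q q' : Equiv.Perm (Fin n) ⧸ stabSubgroup k G n χ,
      (fun a => lam ((wreathPhi G n (rep q)⁻¹) a)) =
        (fun a => lam ((wreathPhi G n (rep q')⁻¹) a)) → q = q' := by
    intro q q' h
    have h1 : ∀ b : Fin n → G, lam ((wreathPhi G n ((rep q')⁻¹ * rep q)) b) = lam b := by
      intro b
      have h2 := congrFun h ((wreathPhi G n (rep q)) b)
      have e1 : (wreathPhi G n (rep q)⁻¹) ((wreathPhi G n (rep q)) b) = b := by
        have h3 := wreathPhi_inv_cancel (rep q)⁻¹ b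
        rwa [inv_inv] at h3
      have e2 : (wreathPhi G n (rep q')⁻¹) ((wreathPhi G n (rep q)) b) =
          (wreathPhi G n ((rep q')⁻¹ * rep q)) b := by
        rw [map_mul]
        rfl
      rw [e1, e2] at h2
      exact h2.symm
    have hη : ((rep q')⁻¹ * rep q) ∈ stabSubgroup k G n χ := by
      rw [mem_stab]
      intro j
      ext g
      have h4 := h1 (Pi.mulSingle j g)
      rw [phi_mulSingle] at h4
      calc ((χ (((rep q')⁻¹ * rep q) j) g : kˣ) : k)
          = lam (Pi.mulSingle (((rep q')⁻¹ * rep q) j) g) := hχ_single _ _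
        _ = lam (Pi.mulSingle j g) := h4
        _ = ((χ j g : kˣ) : k) := (hχ_single _ _).symm
    have h5 : (QuotientGroup.mk (rep q') : Equiv.Perm (Fin n) ⧸ stabSubgroup k G n χ) =
        QuotientGroup.mk (rep q) := QuotientGroup.eq.mpr hη
    rw [hrep, hrep] at h5
    exact h5.symm
  have hJinj : Function.Injective Jmap := by
    rw [← LinearMap.ker_eq_bot]
    rw [Submodule.eq_bot_iff]
    intro F hF
    rw [LinearMap.mem_ker, hJmap] at hF
    have hind := eig_indep fA
      (fun q => fun a => lam ((wreathPhi G n (rep q)⁻¹) a)) Finset.univ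
      (fun q _ q' _ h => hμdist q q' h)
      (fun q => ρ (winr (rep q)) ↑(F q))
      (fun q _ => hmap (rep q) lam ↑(F q) (F q).2)
      hF
    funext q
    have h0 := hind q (Finset.mem_univ q)
    have h1 := congrArg (ρ (winr (rep q)⁻¹)) h0
    rw [map_zero] at h1
    have h2 : ρ (winr (rep q)⁻¹)
        (ρ (winr (rep q)) ↑(F q)) = (↑(F q) : V) := by
      have := hcancel (rep q)⁻¹ (↑(F q) : V)
      rwa [inv_inv] at this
    rw [h2] at h1
    exact Subtype.ext h1
  have hdim2 : Fintype.card (Equiv.Perm (Fin n) ⧸ stabSubgroup k G n χ) * d ≤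
      Module.finrank k V := by
    have h1 := LinearMap.finrank_le_finrank_of_injective hJinj
    calc Fintype.card (Equiv.Perm (Fin n) ⧸ stabSubgroup k G n χ) * d
        = Module.finrank k ((Equiv.Perm (Fin n) ⧸ stabSubgroup k G n χ) → ↥U) := by
          rw [Module.finrank_pi_fintype]
          simp [hd, Finset.sum_const, Nat.smul_one_eq_cast]
      _ ≤ Module.finrank k V := h1
  have hdim3 : Module.finrank k V ≤ Module.finrank k (IndModule (wreathInc k G n χ) τ) := by
    calc Module.finrank k V = Module.finrank k ↥(LinearMap.range Φq) := by
          rw [hrtop, finrank_top]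
      _ ≤ _ := LinearMap.finrank_range_le Φq
  have hdimeq : Module.finrank k (IndModule (wreathInc k G n χ) τ) = Module.finrank k V :=
    le_antisymm (hdim1.trans hdim2) hdim3
  have hinjΦ : Function.Injective Φq :=
    (LinearMap.injective_iff_surjective_of_finrank_eq_finrank hdimeq).mpr hsurj
  set eiso : V ≃ₗ[k] IndModule (wreathInc k G n χ) τ :=
    (LinearEquiv.ofBijective Φq ⟨hinjΦ, hsurj⟩).symm with heiso
  have hΦq_eiso : ∀ x : V, Φq (eiso x) = x := by
    intro x
    have := (LinearEquiv.ofBijective Φq ⟨hinjΦ, hsurj⟩).apply_symm_apply x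
    exact this
  have h_e : ∀ (w : Wreath G n) (x : V), eiso (ρ w x) =
      indRep (wreathInc k G n χ) τ w (eiso x) := by
    intro w x
    apply hinjΦ
    rw [hΦq_eiso, heqv, hΦq_eiso]
  -- irreducibility of the rep of H on U
  set q₀ : Equiv.Perm (Fin n) ⧸ stabSubgroup k G n χ :=
    QuotientGroup.mk (1 : Equiv.Perm (Fin n)) with hq₀def
  have hq₀ : rep q₀ ∈ stabSubgroup k G n χ := by
    have h1 := hmemH (1 : Equiv.Perm (Fin n))
    rw [mul_one] at h1
    exact inv_mem_iff.mp h1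
  have hμq₀ : (fun a => lam ((wreathPhi G n (rep q₀)⁻¹) a)) = lam :=
    funext (fun a => hlam_stab (rep q₀)⁻¹ (inv_mem hq₀) a)
  have hρH_irr : IsIrreducibleRep ρH := by
    constructor
    · refine ⟨⟨v₀, hv₀U⟩, fun h => hv₀ ?_⟩
      simpa using congrArg Subtype.val h
    · intro p hp
      set P : Submodule k V := p.map U.subtype with hPdef
      have hPle : P ≤ U := Submodule.map_subtype_le _ _
      have hPH : ∀ σ : Equiv.Perm (Fin n), σ ∈ stabSubgroup k G n χ →
          ∀ v ∈ P, ρ (winr σ) v ∈ P := by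
        rintro σ hσ v ⟨u, hu, rfl⟩
        exact ⟨ρH ⟨σ, hσ⟩ u, hp ⟨σ, hσ⟩ u hu, rfl⟩
      have hPsub : ∀ (x : SubWreath k G n χ), ∀ v ∈ P,
          ρ (wreathInc k G n χ x) v ∈ P := by
        intro x v hv
        rw [wreathInc_eq', map_mul, Module.End.mul_apply]
        have h1 := hPH ↑x.right x.right.2 v hv
        have hUel : ρ (winr (↑x.right : Equiv.Perm (Fin n))) v ∈ U := hPle h1
        have h2 : ρ (winl x.left)
            (ρ (winr (↑x.right : Equiv.Perm (Fin n))) v) =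
            lam x.left • ρ (winr (↑x.right : Equiv.Perm (Fin n))) v :=
          hUel x.left
        rw [h2]
        exact Submodule.smul_mem _ _ h1
      set Qsup : Submodule k V :=
        ⨆ q : Equiv.Perm (Fin n) ⧸ stabSubgroup k G n χ,
          P.map (ρ (winr (rep q))) with hQsup
      have hQinv : ∀ (w : Wreath G n) (x : V), x ∈ Qsup → ρ w x ∈ Qsup := by
        intro w x hx
        have hmaple : Qsup.map (ρ w) ≤ Qsup := by
          rw [hQsup, Submodule.map_iSup]
          refine iSup_le (fun q => ?_)
          rw [← Submodule.map_comp]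
          obtain ⟨q', x', hq'⟩ := hdec (w * winr (rep q))
          have hcomp : (ρ w) ∘ₗ (ρ (winr (rep q))) =
              (ρ (winr (rep q'))) ∘ₗ (ρ (wreathInc k G n χ x')) := by
            rw [← Module.End.mul_eq_comp, ← map_mul, hq', map_mul, Module.End.mul_eq_comp]
          rw [hcomp, Submodule.map_comp]
          have hPP : Submodule.map (ρ (wreathInc k G n χ x')) P ≤ P := by
            intro v hv
            obtain ⟨u', hu', rfl⟩ := hv
            exact hPsub x' u' hu'
          exact le_trans (Submodule.map_mono hPP)
            (le_iSup (fun q => P.map (ρ (winr (rep q)))) q')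
        exact hmaple ⟨x, hx, rfl⟩
      rcases hV Qsup hQinv with hbot | htop2
      · left
        have hPQ : P ≤ Qsup := by
          intro v hv
          have h1 : ρ (winr (rep q₀)⁻¹) v ∈ P :=
            hPH _ (inv_mem hq₀) v hv
          have h2 := hcancel (rep q₀) v
          exact le_iSup
            (fun q => P.map (ρ (winr (rep q)))) q₀ ⟨_, h1, h2⟩
        rw [hbot] at hPQ
        rw [Submodule.eq_bot_iff]
        intro u hu
        have h3 : (↑u : V) = 0 := (Submodule.mem_bot k).mp (hPQ ⟨u, hu, rfl⟩)
        exact Subtype.ext h3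
      · right
        rw [Submodule.eq_top_iff']
        intro u
        have hu' : (↑u : V) ∈ Qsup := htop2 ▸ Submodule.mem_top
        rw [hQsup, Submodule.mem_iSup_iff_exists_finsupp] at hu'
        obtain ⟨F, hF, hFsum⟩ := hu'
        have hsum : ∑ q, F q = (↑u : V) := by
          rw [← hFsum]
          exact (Finset.sum_subset (Finset.subset_univ _)
            (fun q _ hq => Finsupp.notMem_support_iff.mp hq)).symm
        have hesp : ∀ q, F q ∈ espace fA (fun a => lam ((wreathPhi G n (rep q)⁻¹) a)) := by
          intro q
          obtain ⟨w, hw, hweq⟩ := hF q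
          rw [← hweq]
          exact hmap (rep q) lam w (hPle hw)
        have hmem1 : ∀ q, (F q - (if q = q₀ then (↑u : V) else 0)) ∈
            espace fA (fun a => lam ((wreathPhi G n (rep q)⁻¹) a)) := by
          intro q
          rcases eq_or_ne q q₀ with rfl | hne
          · rw [if_pos rfl]
            refine Submodule.sub_mem _ (hesp q₀) ?_
            rw [hμq₀]
            exact u.2
          · rw [if_neg hne, sub_zero]
            exact hesp q
        have hsum1 : ∑ q, (F q - (if q = q₀ then (↑u : V) else 0)) = 0 := by
          rw [Finset.sum_sub_distrib, hsum]
          have h5 : ∑ q, (if q = q₀ then (↑u : V) else 0) = ↑u := by simp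
          rw [h5, sub_self]
        have hind := eig_indep fA
          (fun q => fun a => lam ((wreathPhi G n (rep q)⁻¹) a)) Finset.univ
          (fun q _ q' _ h => hμdist q q' h)
          (fun q => F q - (if q = q₀ then (↑u : V) else 0))
          (fun q _ => hmem1 q)
          hsum1
        have h6 : F q₀ = (↑u : V) := by
          have h7 := hind q₀ (Finset.mem_univ q₀)
          have h8 : F q₀ - (if q₀ = q₀ then (↑u : V) else 0) = 0 := h7
          rw [if_pos rfl, sub_eq_zero] at h8
          exact h8
        obtain ⟨w, hw, hweq⟩ := hF q₀
        have h7 : (↑u : V) ∈ P := by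
          rw [← h6, ← hweq]
          exact hPH (rep q₀) hq₀ w hw
        obtain ⟨u', hu'p, hu'eq⟩ := h7
        have h8 : u' = u := Subtype.ext hu'eq
        exact h8 ▸ hu'p
  have hρM_irr : IsIrreducibleRep ρM :=
    isIrreducibleRep_of_equiv ρH ρM bU (fun g x => conjRep_intertwine ρH bU g x) hρH_irr
  exact ⟨χ, d, ρM, hρM_irr, eiso, h_e⟩
end
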